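/- arXiv:1804.08980 — 9 statements merged into one kernel-verified Lean document; each statement's English description precedes it below -/
import Mathlib

section
/- Let (X,𝒳) and (Y,𝒴) be standard Borel spaces, let X be a random variable with distribution μ_X on X, and let ρ : X × Y → [0,∞] be a measurable distortion function such that (i) inf_{y∈Y} ρ(x,y) = 0 for all x ∈ X, and (ii) there exists a finite set B ⊆ Y with E[min_{y∈B} ρ(X,y)] < ∞. Suppose μ is a σ-finite measure on (X,𝒳) with μ_X ≪ μ and such that the generalized entropy h_μ(X) := −∫ log(dμ_X/dμ)(x) dμ_X(x) is finite. Define ν(s) := sup_{y∈Y} ∫ e^{−s ρ(x,y)} dμ(x) for s ≥ 0, the rate-distortion function R(D) := inf { I(π) : π a probability measure on X × Y with first marginal μ_X and ∫ ρ dπ ≤ D }, where I(π) is the Kullback–Leibler divergence of π with respect to the product of its two marginals (with I(π) = ∞ if π is not absolutely continuous with respect to this product), and D₀ := inf{ D ≥ 0 : R(D) < ∞ }. Then for every D ∈ (D₀, ∞), R(D) ≥ h_μ(X) − inf_{s ≥ 0} ( s·D + log ν(s) ). -/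
open MeasureTheory Real Set
open scoped ENNReal NNReal Classical

/-- `expNeg u = e^{-u}` for `u ∈ [0,∞]`, with `e^{-∞} = 0`. -/
noncomputable def expNeg (u : ℝ≥0∞) : ℝ≥0∞ :=
  if u = ⊤ then 0 else ENNReal.ofReal (Real.exp (-u.toReal))

/-- The mutual information `I(P)` of a coupling `P`, i.e. the Kullback–Leibler divergence of
`P` with respect to the product of its two marginals: `∫ log(dP/d(P₁ ⊗ P₂)) dP` if `P` is
absolutely continuous with respect to `P₁ ⊗ P₂` (and the log-density is `P`-integrable, which
for couplings always holds when the divergence is finite), and `∞` otherwise. -/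
noncomputable def mutualInfo {α β : Type*} [MeasurableSpace α] [MeasurableSpace β]
    (P : Measure (α × β)) : EReal :=
  if P ≪ P.fst.prod P.snd ∧
      Integrable (fun p => Real.log (P.rnDeriv (P.fst.prod P.snd) p).toReal) P
  then ((∫ p, Real.log (P.rnDeriv (P.fst.prod P.snd) p).toReal ∂P : ℝ) : EReal)
  else ⊤

/-- The rate-distortion function
`R(D) = inf { I(P) : P prob. measure on X × Y, first marginal μX, ∫ ρ dP ≤ D }`. -/
noncomputable def RD {α β : Type*} [MeasurableSpace α] [MeasurableSpace β]
    (μX : Measure α) (ρ : α → β → ℝ≥0∞) (D : ℝ) : EReal :=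
  ⨅ (P : Measure (α × β)) (_ : IsProbabilityMeasure P) (_ : P.fst = μX)
    (_ : ∫⁻ p, ρ p.1 p.2 ∂P ≤ ENNReal.ofReal D), mutualInfo P

-- KL nonnegativity
private lemma integral_llr_nonneg' {α : Type*} [MeasurableSpace α]
    (P T : Measure α) [IsProbabilityMeasure P] [IsFiniteMeasure T] (hT : T Set.univ ≤ 1)
    (hPT : P ≪ T) (h_int : Integrable (llr P T) P) :
    0 ≤ ∫ x, llr P T x ∂P := by
  set r : α → ℝ := fun x => (P.rnDeriv T x).toReal with hr
  have hmeas : Measurable fun x => (r x)⁻¹ :=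
    (Measure.measurable_rnDeriv P T).ennreal_toReal.inv
  have h1 : ∀ᵐ x ∂P, 0 < P.rnDeriv T x := Measure.rnDeriv_pos hPT
  have h2 : ∀ᵐ x ∂P, P.rnDeriv T x < ⊤ := hPT.ae_le (Measure.rnDeriv_lt_top P T)
  have hP : P = T.withDensity (P.rnDeriv T) := (Measure.withDensity_rnDeriv_eq P T hPT).symm
  have hpoint : ∀ u : ℝ≥0∞, u * ENNReal.ofReal (u.toReal)⁻¹ ≤ 1 := by
    intro u
    by_cases hu : u = ⊤
    · simp [hu]
    by_cases hu0 : u = 0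
    · simp [hu0]
    · have : ENNReal.ofReal (u.toReal)⁻¹ = u⁻¹ := by
          conv_rhs => rw [← ENNReal.ofReal_toReal hu]
          rw [← ENNReal.ofReal_inv_of_pos (ENNReal.toReal_pos hu0 hu)]
      rw [this, ENNReal.mul_inv_cancel hu0 hu]
  have hlint : ∫⁻ x, ENNReal.ofReal (r x)⁻¹ ∂P ≤ 1 := by
    conv_lhs => rw [hP]
    rw [lintegral_withDensity_eq_lintegral_mul _ (Measure.measurable_rnDeriv P T)
      (hmeas.ennreal_ofReal)]
    calc ∫⁻ x, (P.rnDeriv T * fun x => ENNReal.ofReal (r x)⁻¹) x ∂T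
        ≤ ∫⁻ _, 1 ∂T := lintegral_mono fun x => hpoint _
      _ = T Set.univ := by simp
      _ ≤ 1 := hT
  have hinv_int : Integrable (fun x => (r x)⁻¹) P := by
    refine ⟨hmeas.aestronglyMeasurable, ?_⟩
    rw [hasFiniteIntegral_iff_ofReal (ae_of_all _ fun x => inv_nonneg.2 ENNReal.toReal_nonneg)]
    exact hlint.trans_lt ENNReal.one_lt_top
  have hle : ∀ᵐ x ∂P, 1 - (r x)⁻¹ ≤ llr P T x := by
    filter_upwards [h1, h2] with x hx1 hx2
    have hrx : 0 < r x := ENNReal.toReal_pos hx1.ne' hx2.ne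
    have := Real.log_le_sub_one_of_pos (inv_pos.2 hrx)
    rw [Real.log_inv] at this
    have : 1 - (r x)⁻¹ ≤ Real.log (r x) := by linarith
    exact this
  have hmono : ∫ x, (1 - (r x)⁻¹) ∂P ≤ ∫ x, llr P T x ∂P :=
    integral_mono_ae ((integrable_const 1).sub hinv_int) h_int hle
  have hint_inv_le : ∫ x, (r x)⁻¹ ∂P ≤ 1 := by
    have h0 : 0 ≤ᵐ[P] fun x => (r x)⁻¹ :=
      ae_of_all _ fun x => inv_nonneg.2 ENNReal.toReal_nonneg
    rw [integral_eq_lintegral_of_nonneg_ae h0 hmeas.aestronglyMeasurable]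
    calc (∫⁻ x, ENNReal.ofReal (r x)⁻¹ ∂P).toReal ≤ (1 : ℝ≥0∞).toReal :=
          ENNReal.toReal_mono ENNReal.one_ne_top hlint
      _ = 1 := by simp
  have : ∫ x, (1 - (r x)⁻¹) ∂P = 1 - ∫ x, (r x)⁻¹ ∂P := by
    rw [integral_sub (integrable_const 1) hinv_int]; simp
  linarith [hmono, this ▸ hmono]


private lemma lintegral_exp_neg_llr_mul_le {α : Type*} [MeasurableSpace α]
    (μX μ : Measure α) [SigmaFinite μX] [SigmaFinite μ] (hac : μX ≪ μ)
    (g : α → ℝ≥0∞) (hg : Measurable g) :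
    ∫⁻ x, ENNReal.ofReal (Real.exp (- llr μX μ x)) * g x ∂μX ≤ ∫⁻ x, g x ∂μ := by
  have hmeas : Measurable fun x => ENNReal.ofReal (Real.exp (- llr μX μ x)) * g x :=
    (((measurable_llr μX μ).neg.exp).ennreal_ofReal).mul hg
  have hrw := lintegral_withDensity_eq_lintegral_mul μ (Measure.measurable_rnDeriv μX μ) hmeas
  rw [Measure.withDensity_rnDeriv_eq μX μ hac] at hrw
  rw [hrw]
  refine lintegral_mono_ae ?_
  filter_upwards [Measure.rnDeriv_lt_top μX μ] with x hx
  simp only [Pi.mul_apply]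
  rcases eq_or_ne (μX.rnDeriv μ x) 0 with h0 | h0
  · simp [h0]
  · have htR : 0 < (μX.rnDeriv μ x).toReal := ENNReal.toReal_pos h0 hx.ne
    have : ENNReal.ofReal (Real.exp (- llr μX μ x)) = (μX.rnDeriv μ x)⁻¹ := by
      rw [llr, Real.exp_neg, Real.exp_log htR]
      conv_rhs => rw [← ENNReal.ofReal_toReal hx.ne]
      rw [← ENNReal.ofReal_inv_of_pos htR]
    rw [this, ← mul_assoc, ENNReal.mul_inv_cancel h0 hx.ne, one_mul]


lemma measurable_expNeg : Measurable expNeg := by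
  unfold expNeg
  exact Measurable.ite (measurableSet_singleton ⊤) measurable_const
    (ENNReal.measurable_toReal.neg.exp.ennreal_ofReal)

private lemma key_bound {X Y : Type*} [MeasurableSpace X] [MeasurableSpace Y]
    (μX : Measure X) [IsProbabilityMeasure μX]
    (μ : Measure X) [SigmaFinite μ] (hac : μX ≪ μ)
    (hint : Integrable (llr μX μ) μX)
    (ρ : X → Y → ℝ≥0∞) (hρ : Measurable (fun p : X × Y => ρ p.1 p.2))
    (P : Measure (X × Y)) [IsProbabilityMeasure P] (hfst : P.fst = μX)
    (s D : ℝ) (hs : 0 ≤ s) (hD : 0 ≤ D)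
    (hρP : ∫⁻ p, ρ p.1 p.2 ∂P ≤ ENNReal.ofReal D)
    (c : ℝ≥0∞) (hc : c ≠ ⊤)
    (hcb : ∀ y : Y, ∫⁻ x, expNeg (ENNReal.ofReal s * ρ x y) ∂μ ≤ c)
    (hPQ : P ≪ P.fst.prod P.snd)
    (hintP : Integrable (llr P (P.fst.prod P.snd)) P) :
    0 < c.toReal ∧
      (-∫ x, llr μX μ x ∂μX) - s * D - Real.log c.toReal ≤
        ∫ p, llr P (P.fst.prod P.snd) p ∂P := by
  set Q := P.fst.prod P.snd with hQ
  haveI : IsProbabilityMeasure P.fst := by rw [hfst]; infer_instance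
  haveI : IsProbabilityMeasure Q := by infer_instance
  -- the set where ρ is finite
  set A : Set (X × Y) := {p | ρ p.1 p.2 ≠ ⊤} with hAdef
  have hA : MeasurableSet A := (hρ (measurableSet_singleton ⊤)).compl
  have hρlt : ∫⁻ p, ρ p.1 p.2 ∂P < ⊤ := hρP.trans_lt ENNReal.ofReal_lt_top
  have hPA : ∀ᵐ p ∂P, p ∈ A := by
    filter_upwards [ae_lt_top hρ hρlt.ne] with p hp; exact hp.ne
  set Q' := Q.restrict A with hQ'
  haveI : IsFiniteMeasure Q' := by rw [hQ']; infer_instance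
  have hPQ' : P ≪ Q' := by
    have h1 : P.restrict A = P := Measure.restrict_eq_self_of_ae_mem hPA
    rw [hQ', ← h1]
    exact hPQ.restrict A
  haveI : NeZero Q' := by
    refine ⟨fun h0 => ?_⟩
    have hP0 : P = 0 := Measure.absolutelyContinuous_zero_iff.mp (h0 ▸ hPQ')
    have := measure_univ (μ := P)
    rw [hP0] at this; simp at this
  -- llr w.r.t. Q' agrees with llr w.r.t. Q, P-a.e.
  have hrn : P.rnDeriv Q' =ᵐ[Q'] P.rnDeriv Q := by
    have h1 : P = Q'.withDensity (P.rnDeriv Q) := by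
      rw [hQ', ← restrict_withDensity hA, Measure.withDensity_rnDeriv_eq P Q hPQ,
        Measure.restrict_eq_self_of_ae_mem hPA]
    nth_rewrite 1 [h1]
    exact Measure.rnDeriv_withDensity Q' (Measure.measurable_rnDeriv P Q)
  have hllr : llr P Q' =ᵐ[P] llr P Q := by
    filter_upwards [hPQ'.ae_le hrn] with p hp
    simp only [llr, hp]
  have hintP' : Integrable (llr P Q') P := by
    rw [integrable_congr hllr]; exact hintP
  -- the tilting function
  set f : X × Y → ℝ := fun p => - llr μX μ p.1 - s * (ρ p.1 p.2).toReal with hf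
  have hfmeas : Measurable f :=
    (((measurable_llr μX μ).comp measurable_fst).neg).sub
      (hρ.ennreal_toReal.const_mul s)
  -- integrability of components under P
  have hint1 : Integrable (fun p : X × Y => llr μX μ p.1) P := by
    have h' : Integrable (llr μX μ) (P.map Prod.fst) := by
      rw [show P.map Prod.fst = μX from hfst]; exact hint
    exact (integrable_map_measure (stronglyMeasurable_llr μX μ).aestronglyMeasurable
      measurable_fst.aemeasurable).mp h'
  have hint2 : Integrable (fun p : X × Y => (ρ p.1 p.2).toReal) P :=
    integrable_toReal_of_lintegral_ne_top hρ.aemeasurable hρlt.ne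
  have hfInt : Integrable f P := hint1.neg.sub (hint2.const_mul s)
  -- value of ∫ f dP
  have hint_fst : ∫ p, llr μX μ p.1 ∂P = ∫ x, llr μX μ x ∂μX := by
    have h2 : ∫ x, llr μX μ x ∂(P.map Prod.fst) = ∫ p, llr μX μ p.1 ∂P :=
      integral_map measurable_fst.aemeasurable
        (stronglyMeasurable_llr μX μ).aestronglyMeasurable
    rw [← h2, show P.map Prod.fst = μX from hfst]
  have hρD' : ∫ p, (ρ p.1 p.2).toReal ∂P ≤ D := by
    rw [integral_toReal hρ.aemeasurable (ae_lt_top hρ hρlt.ne)]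
    calc (∫⁻ p, ρ p.1 p.2 ∂P).toReal ≤ (ENNReal.ofReal D).toReal :=
          ENNReal.toReal_mono ENNReal.ofReal_ne_top hρP
      _ = D := ENNReal.toReal_ofReal hD
  have hfVal : -∫ x, llr μX μ x ∂μX - s * D ≤ ∫ p, f p ∂P := by
    have h1 : ∫ p, f p ∂P = (∫ p, -llr μX μ p.1 ∂P) - ∫ p, s * (ρ p.1 p.2).toReal ∂P :=
      integral_sub hint1.neg (hint2.const_mul s)
    rw [h1, integral_neg, hint_fst, MeasureTheory.integral_const_mul]
    have : s * ∫ p, (ρ p.1 p.2).toReal ∂P ≤ s * D :=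
      mul_le_mul_of_nonneg_left hρD' hs
    linarith
  -- bound on ∫⁻ e^f dQ'
  have hmeas_ef : Measurable fun p => ENNReal.ofReal (Real.exp (f p)) :=
    hfmeas.exp.ennreal_ofReal
  have hmeas_ind : Measurable (A.indicator fun p => ENNReal.ofReal (Real.exp (f p))) :=
    hmeas_ef.indicator hA
  have hefQ' : ∫⁻ p, ENNReal.ofReal (Real.exp (f p)) ∂Q' ≤ c := by
    rw [hQ', hQ, hfst, ← lintegral_indicator hA]
    calc ∫⁻ p, A.indicator (fun p => ENNReal.ofReal (Real.exp (f p))) p ∂(μX.prod P.snd)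
        = ∫⁻ y, ∫⁻ x, A.indicator (fun p => ENNReal.ofReal (Real.exp (f p))) (x, y) ∂μX
            ∂P.snd := lintegral_prod_symm _ hmeas_ind.aemeasurable
      _ ≤ ∫⁻ _, c ∂P.snd := by
          refine lintegral_mono fun y => ?_
          calc ∫⁻ x, A.indicator (fun p => ENNReal.ofReal (Real.exp (f p))) (x, y) ∂μX
              ≤ ∫⁻ x, ENNReal.ofReal (Real.exp (- llr μX μ x)) *
                  expNeg (ENNReal.ofReal s * ρ x y) ∂μX := by
                refine lintegral_mono fun x => ?_
                by_cases hxy : (x, y) ∈ A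
                · rw [Set.indicator_of_mem hxy]
                  have hρfin : ρ x y ≠ ⊤ := hxy
                  have hmul : ENNReal.ofReal s * ρ x y ≠ ⊤ :=
                    ENNReal.mul_ne_top ENNReal.ofReal_ne_top hρfin
                  have hexpNeg : expNeg (ENNReal.ofReal s * ρ x y)
                      = ENNReal.ofReal (Real.exp (-(s * (ρ x y).toReal))) := by
                    rw [expNeg, if_neg hmul, ENNReal.toReal_mul, ENNReal.toReal_ofReal hs]
                  rw [hexpNeg, hf]
                  simp only []
                  rw [sub_eq_add_neg, Real.exp_add,
                    ENNReal.ofReal_mul (Real.exp_pos _).le]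
                · rw [Set.indicator_of_notMem hxy]
                  exact zero_le
            _ ≤ ∫⁻ x, expNeg (ENNReal.ofReal s * ρ x y) ∂μ :=
                lintegral_exp_neg_llr_mul_le μX μ hac _
                  (measurable_expNeg.comp
                    (measurable_const.mul (hρ.comp measurable_prodMk_right)))
            _ ≤ c := hcb y
      _ = c := by simp
  set Z := ∫ p, Real.exp (f p) ∂Q' with hZ
  have hefInt : Integrable (fun p => Real.exp (f p)) Q' := by
    refine ⟨hfmeas.exp.aestronglyMeasurable, ?_⟩
    rw [hasFiniteIntegral_iff_ofReal (ae_of_all _ fun p => (Real.exp_pos _).le)]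
    exact hefQ'.trans_lt hc.lt_top
  have hZpos : 0 < Z := integral_exp_pos hefInt
  have hZ_eq : ENNReal.ofReal Z = ∫⁻ p, ENNReal.ofReal (Real.exp (f p)) ∂Q' :=
    ofReal_integral_eq_lintegral_ofReal hefInt (ae_of_all _ fun p => (Real.exp_pos _).le)
  have hZle : Z ≤ c.toReal := by
    have h3 : ENNReal.ofReal Z ≤ c := hZ_eq ▸ hefQ'
    calc Z = (ENNReal.ofReal Z).toReal := (ENNReal.toReal_ofReal hZpos.le).symm
      _ ≤ c.toReal := ENNReal.toReal_mono hc h3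
  have hcpos : 0 < c.toReal := hZpos.trans_le hZle
  refine ⟨hcpos, ?_⟩
  set T := Q'.tilted f with hT
  haveI : IsProbabilityMeasure T := isProbabilityMeasure_tilted hefInt
  have hPT : P ≪ T := hPQ'.trans (absolutelyContinuous_tilted hefInt)
  have hintT : Integrable (llr P T) P := integrable_llr_tilted_right hPQ' hfInt hintP' hefInt
  have hTval : ∫ p, llr P T p ∂P = ∫ p, llr P Q' p ∂P - ∫ p, f p ∂P + Real.log Z :=
    integral_llr_tilted_right hPQ' hfInt hefInt hintP'
  have hKL : 0 ≤ ∫ p, llr P T p ∂P :=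
    integral_llr_nonneg' P T measure_univ.le hPT hintT
  have hQQ' : ∫ p, llr P Q' p ∂P = ∫ p, llr P Q p ∂P := integral_congr_ae hllr
  have hlogZ : Real.log Z ≤ Real.log c.toReal := Real.log_le_log hZpos hZle
  rw [hQQ'] at hTval
  linarith [hfVal, hKL, hTval, hlogZ]
/-- Shannon lower bound for general reference measures, Lemma 3 of the
paper. If (i) `inf_y ρ(x,y) = 0` for all `x`, (ii) `E[min_{y ∈ B} ρ(X,y)] < ∞` for some
finite `B ⊆ Y`, and `μ` is a σ-finite reference measure for `X` (`μX ≪ μ`, generalized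
entropy `h = hμ(X)` finite), then for every `D ∈ (D₀,∞)`,
`R(D) ≥ h − inf_{s ≥ 0}(sD + log ν(s))` where `ν(s) = sup_y ∫ e^{-sρ(x,y)} dμ(x)`. -/
theorem stmt1
    {X Y : Type*} [MeasurableSpace X] [StandardBorelSpace X]
    [MeasurableSpace Y] [StandardBorelSpace Y]
    (μX : Measure X) [IsProbabilityMeasure μX]
    (ρ : X → Y → ℝ≥0∞) (hρ : Measurable (fun p : X × Y => ρ p.1 p.2))
    (hinf : ∀ x : X, (⨅ y : Y, ρ x y) = 0)
    (hB : ∃ B : Finset Y, B.Nonempty ∧ (∫⁻ x, ⨅ y ∈ B, ρ x y ∂μX) < ⊤)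
    (μ : Measure X) [SigmaFinite μ] (hac : μX ≪ μ)
    (h : ℝ)
    (hint : Integrable (fun x => Real.log (μX.rnDeriv μ x).toReal) μX)
    (hh : h = -∫ x, Real.log (μX.rnDeriv μ x).toReal ∂μX)
    (ν : ℝ → ℝ≥0∞)
    (hν : ∀ s : ℝ, ν s = ⨆ y : Y, ∫⁻ x, expNeg (ENNReal.ofReal s * ρ x y) ∂μ)
    (D₀ : ℝ) (hD₀ : D₀ = sInf {D : ℝ | 0 ≤ D ∧ RD μX ρ D < ⊤}) :
    ∀ D : ℝ, D₀ < D →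
      RD μX ρ D ≥
        (h : EReal) - ⨅ s : {s : ℝ // 0 ≤ s}, (((s : ℝ) * D : ℝ) : EReal) + ENNReal.log (ν s) := by
  intro D hDgt
  have hD0nn : 0 ≤ D₀ := by
    rw [hD₀]; exact Real.sInf_nonneg fun x hx => hx.1
  have hD : 0 ≤ D := hD0nn.trans hDgt.le
  rw [RD, ge_iff_le]
  refine le_iInf fun P => le_iInf fun hP => le_iInf fun hfst => le_iInf fun hρD => ?_
  haveI := hP
  rw [mutualInfo]
  split_ifs with hcond
  · obtain ⟨hPQ, hintP⟩ := hcond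
    have hintP' : Integrable (llr P (P.fst.prod P.snd)) P := hintP
    set K : ℝ := ∫ p, Real.log (P.rnDeriv (P.fst.prod P.snd) p).toReal ∂P with hK
    have hKllr : K = ∫ p, llr P (P.fst.prod P.snd) p ∂P := rfl
    have hIK : ((h - K : ℝ) : EReal) ≤
        ⨅ s : {s : ℝ // 0 ≤ s}, (((s : ℝ) * D : ℝ) : EReal) + ENNReal.log (ν s) := by
      refine le_iInf fun s => ?_
      by_cases hνt : ν s = ⊤
      · rw [hνt, ENNReal.log_top, EReal.add_top_of_ne_bot (EReal.coe_ne_bot _)]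
        exact le_top
      · have hcb : ∀ y : Y, ∫⁻ x, expNeg (ENNReal.ofReal (s : ℝ) * ρ x y) ∂μ ≤ ν s := by
          intro y
          rw [hν]
          exact le_iSup (fun y => ∫⁻ x, expNeg (ENNReal.ofReal (s : ℝ) * ρ x y) ∂μ) y
        obtain ⟨hcpos, hineq⟩ := key_bound μX μ hac hint ρ hρ P hfst (s : ℝ) D s.2 hD
          hρD (ν s) hνt hcb hPQ hintP'
        rw [ENNReal.log_pos_real' hcpos, ← EReal.coe_add]
        have hh' : h = -∫ x, llr μX μ x ∂μX := hh
        rw [EReal.coe_le_coe_iff]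
        rw [hh', hKllr]
        linarith [hineq]
    calc (h : EReal) - (⨅ s : {s : ℝ // 0 ≤ s}, (((s : ℝ) * D : ℝ) : EReal) + ENNReal.log (ν s))
        ≤ (h : EReal) - ((h - K : ℝ) : EReal) := EReal.sub_le_sub le_rfl hIK
      _ = (K : EReal) := by norm_cast; ring
  · exact le_top
end

section
/- Let (X,𝒳,μ) be a measure space, (Y,𝒴) a measurable space, ρ : X × Y → [0,∞] a measurable distortion function, and k > 0, m > 0, c > 0. If μ(B_{ρ^{1/k}}(y,δ)) ≤ c δ^m for all y ∈ Y and all δ > 0, then for every s > 0 and every y ∈ Y, ∫ e^{−s ρ(x,y)} dμ(x) ≤ c · Γ(m/k + 1) · s^{−m/k}. -/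
open MeasureTheory Real Set
open scoped ENNReal NNReal

lemma expNeg_layer (u : ℝ≥0∞) :
    expNeg u = ∫⁻ l in Set.Ioi (0:ℝ),
      ({l : ℝ | u < ENNReal.ofReal l}).indicator (fun l => ENNReal.ofReal (Real.exp (-l))) l := by
  by_cases hu : u = ⊤
  · have h : {l : ℝ | u < ENNReal.ofReal l} = ∅ := by
      ext l; simp [hu]
    simp [expNeg, hu, h]
  · have hset : {l : ℝ | u < ENNReal.ofReal l} = Set.Ioi u.toReal := by
      ext l; simp [ENNReal.lt_ofReal_iff_toReal_lt hu, Set.mem_Ioi]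
    rw [hset, lintegral_indicator measurableSet_Ioi,
      Measure.restrict_restrict measurableSet_Ioi, Set.Ioi_inter_Ioi,
      sup_eq_left.mpr ENNReal.toReal_nonneg]
    have hint : IntegrableOn (fun x : ℝ => Real.exp (-x)) (Set.Ioi u.toReal) := by
      simpa using exp_neg_integrableOn_Ioi u.toReal one_pos
    rw [← MeasureTheory.ofReal_integral_eq_lintegral_ofReal hint
      (ae_of_all _ fun x => (Real.exp_pos _).le), integral_exp_neg_Ioi]
    simp [expNeg, hu]

/-- If `μ(B_{ρ^{1/k}}(y,δ)) ≤ c δ^m` for all `y` and all `δ > 0`, then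
`∫ e^{-s ρ(x,y)} dμ(x) ≤ c Γ(m/k + 1) s^{-m/k}` for all `s > 0` and `y`. -/
theorem stmt2
    {X Y : Type*} [MeasurableSpace X] [MeasurableSpace Y]
    (μ : Measure X)
    (ρ : X → Y → ℝ≥0∞) (hρ : Measurable (fun p : X × Y => ρ p.1 p.2))
    (k m : ℝ) (hk : 0 < k) (hm : 0 < m) (c : ℝ) (hc : 0 < c)
    (hsub : ∀ y : Y, ∀ δ : ℝ, 0 < δ →
      μ {x | ρ x y < ENNReal.ofReal (δ ^ k)} ≤ ENNReal.ofReal (c * δ ^ m)) :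
    ∀ s : ℝ, 0 < s → ∀ y : Y,
      ∫⁻ x, expNeg (ENNReal.ofReal s * ρ x y) ∂μ ≤
        ENNReal.ofReal (c * Real.Gamma (m / k + 1) * s ^ (-(m / k))) := by
  intro s hs y
  set a : ℝ := m / k with ha_def
  have ha : 0 < a := div_pos hm hk
  have hρy : Measurable (fun x => ρ x y) := hρ.comp (measurable_id.prodMk measurable_const)
  have hfmeas : Measurable (fun x => ENNReal.ofReal s * ρ x y) := measurable_const.mul hρy
  have hSl : ∀ l : ℝ, MeasurableSet {x | ENNReal.ofReal s * ρ x y < ENNReal.ofReal l} :=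
    fun l => measurableSet_lt hfmeas measurable_const
  set A : Set X := {x | ρ x y ≠ ⊤} with hA_def
  have hA : MeasurableSet A := (hρy (measurableSet_singleton ⊤)).compl
  have hs0 : ENNReal.ofReal s ≠ 0 := (ENNReal.ofReal_pos.mpr hs).ne'
  -- reduce to the restriction of μ to A
  have hres : ∫⁻ x, expNeg (ENNReal.ofReal s * ρ x y) ∂μ
      = ∫⁻ x, expNeg (ENNReal.ofReal s * ρ x y) ∂(μ.restrict A) := by
    rw [← lintegral_indicator hA]
    refine lintegral_congr fun x => ?_
    by_cases hx : x ∈ A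
    · simp [hx]
    · have hxt : ρ x y = ⊤ := not_not.mp hx
      simp [hx, hxt, ENNReal.mul_top hs0, expNeg]
  haveI : SigmaFinite (μ.restrict A) := by
    refine ⟨⟨⟨fun n => {x | ρ x y < ENNReal.ofReal ((n : ℝ) + 1)} ∪ Aᶜ,
      fun _ => trivial, fun n => ?_, ?_⟩⟩⟩
    · rw [Measure.restrict_apply' hA]
      have hδ : (0:ℝ) < ((n : ℝ) + 1) ^ (1 / k) := Real.rpow_pos_of_pos (by positivity) _
      have hδk : (((n : ℝ) + 1) ^ (1 / k)) ^ k = (n : ℝ) + 1 := by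
        rw [← Real.rpow_mul (by positivity), one_div_mul_cancel hk.ne', Real.rpow_one]
      refine ((measure_mono ?_).trans (hsub y _ hδ)).trans_lt ENNReal.ofReal_lt_top
      rw [hδk]
      rintro x ⟨h1 | h1, h2⟩
      · exact h1
      · exact absurd h2 h1
    · ext x
      simp only [Set.mem_iUnion, Set.mem_univ, iff_true]
      by_cases hx : ρ x y = ⊤
      · exact ⟨0, Or.inr (fun h => h hx)⟩
      · obtain ⟨n, hn⟩ := ENNReal.exists_nat_gt hx
        refine ⟨n, Or.inl (hn.trans_le ?_)⟩
        rw [← ENNReal.ofReal_natCast n]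
        exact ENNReal.ofReal_le_ofReal (by linarith)
  rw [hres]
  set ν : Measure X := μ.restrict A with hν_def
  have hν_le : ∀ T : Set X, ν T ≤ μ T := by
    intro T
    rw [hν_def, Measure.restrict_apply' hA]
    exact measure_mono Set.inter_subset_left
  calc ∫⁻ x, expNeg (ENNReal.ofReal s * ρ x y) ∂ν
      = ∫⁻ x, (∫⁻ l in Set.Ioi (0:ℝ),
          ({l : ℝ | ENNReal.ofReal s * ρ x y < ENNReal.ofReal l}).indicator
            (fun l => ENNReal.ofReal (Real.exp (-l))) l) ∂ν := by
        simp_rw [expNeg_layer]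
    _ = ∫⁻ l in Set.Ioi (0:ℝ), (∫⁻ x,
          ({l : ℝ | ENNReal.ofReal s * ρ x y < ENNReal.ofReal l}).indicator
            (fun l => ENNReal.ofReal (Real.exp (-l))) l ∂ν) := by
        refine (lintegral_lintegral_swap (μ := volume.restrict (Set.Ioi (0:ℝ))) (ν := ν)
          (f := fun (l : ℝ) (x : X) =>
            ({l' : ℝ | ENNReal.ofReal s * ρ x y < ENNReal.ofReal l'}).indicator
              (fun l' => ENNReal.ofReal (Real.exp (-l'))) l) ?_).symm
        have hS : MeasurableSet {p : ℝ × X | ENNReal.ofReal s * ρ p.2 y < ENNReal.ofReal p.1} :=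
          measurableSet_lt (hfmeas.comp measurable_snd)
            (measurable_fst.ennreal_ofReal)
        have : (Function.uncurry fun (l : ℝ) (x : X) =>
            ({l' : ℝ | ENNReal.ofReal s * ρ x y < ENNReal.ofReal l'}).indicator
              (fun l' => ENNReal.ofReal (Real.exp (-l'))) l)
            = ({p : ℝ × X | ENNReal.ofReal s * ρ p.2 y < ENNReal.ofReal p.1}).indicator
              (fun p => ENNReal.ofReal (Real.exp (-p.1))) := by
          ext p
          by_cases h : ENNReal.ofReal s * ρ p.2 y < ENNReal.ofReal p.1 <;>
            simp [Function.uncurry, Set.indicator, h]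
        rw [this]
        exact (((measurable_fst.neg.exp).ennreal_ofReal).indicator hS).aemeasurable
    _ = ∫⁻ l in Set.Ioi (0:ℝ), ENNReal.ofReal (Real.exp (-l)) *
          ν {x | ENNReal.ofReal s * ρ x y < ENNReal.ofReal l} := by
        refine lintegral_congr fun l => ?_
        have h : (fun x => ({l' : ℝ | ENNReal.ofReal s * ρ x y < ENNReal.ofReal l'}).indicator
              (fun l' => ENNReal.ofReal (Real.exp (-l'))) l)
            = ({x | ENNReal.ofReal s * ρ x y < ENNReal.ofReal l}).indicator
              (fun _ => ENNReal.ofReal (Real.exp (-l))) := by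
          ext x
          by_cases hx : ENNReal.ofReal s * ρ x y < ENNReal.ofReal l <;>
            simp [Set.indicator, hx]
        rw [h, lintegral_indicator_const (hSl l)]
    _ ≤ ∫⁻ l in Set.Ioi (0:ℝ), ENNReal.ofReal (Real.exp (-l)) *
          ENNReal.ofReal (c * (l / s) ^ a) := by
        refine lintegral_mono_ae ((ae_restrict_iff' measurableSet_Ioi).2
          (ae_of_all _ fun l hl => ?_))
        have hl0 : (0:ℝ) < l := hl
        refine mul_le_mul_right ?_ _
        have hls : (0:ℝ) < l / s := div_pos hl0 hs
        have hδ : (0:ℝ) < (l / s) ^ (1 / k) := Real.rpow_pos_of_pos hls _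
        have hk' : ((l / s) ^ (1 / k)) ^ k = l / s := by
          rw [← Real.rpow_mul hls.le, one_div_mul_cancel hk.ne', Real.rpow_one]
        have hm' : ((l / s) ^ (1 / k)) ^ m = (l / s) ^ a := by
          rw [← Real.rpow_mul hls.le, ha_def, one_div, inv_mul_eq_div]
        have hsetEq : {x | ENNReal.ofReal s * ρ x y < ENNReal.ofReal l}
            = {x | ρ x y < ENNReal.ofReal (l / s)} := by
          ext x
          rw [Set.mem_setOf_eq, Set.mem_setOf_eq, ENNReal.ofReal_div_of_pos hs,
            ENNReal.lt_div_iff_mul_lt (Or.inl hs0) (Or.inl ENNReal.ofReal_ne_top),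
            mul_comm]
        calc ν {x | ENNReal.ofReal s * ρ x y < ENNReal.ofReal l}
            ≤ μ {x | ρ x y < ENNReal.ofReal (((l / s) ^ (1 / k)) ^ k)} := by
              rw [hk', ← hsetEq]
              exact hν_le _
          _ ≤ ENNReal.ofReal (c * ((l / s) ^ (1 / k)) ^ m) := hsub y _ hδ
          _ = ENNReal.ofReal (c * (l / s) ^ a) := by rw [hm']
    _ = ENNReal.ofReal (∫ l in Set.Ioi (0:ℝ), Real.exp (-l) * (c * (l / s) ^ a)) := by
        have h1 : IntegrableOn (fun l : ℝ => Real.exp (-l) * l ^ a) (Set.Ioi 0) := by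
          simpa using Real.GammaIntegral_convergent (show (0:ℝ) < a + 1 by linarith)
        have h2 : IntegrableOn (fun l : ℝ => Real.exp (-l) * (c * (l / s) ^ a)) (Set.Ioi 0) := by
          refine IntegrableOn.congr_fun (h1.const_mul (c * s ^ (-a)))
            (fun l hl => ?_) measurableSet_Ioi
          have hl0 : (0:ℝ) < l := hl
          rw [Real.div_rpow hl0.le hs.le, Real.rpow_neg hs.le, div_eq_mul_inv]
          ring
        have hnn : 0 ≤ᵐ[volume.restrict (Set.Ioi (0:ℝ))]
            fun l : ℝ => Real.exp (-l) * (c * (l / s) ^ a) := by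
          refine (ae_restrict_iff' measurableSet_Ioi).2 (ae_of_all _ fun l hl => ?_)
          have hl0 : (0:ℝ) < l := hl
          positivity
        rw [MeasureTheory.ofReal_integral_eq_lintegral_ofReal h2 hnn]
        exact lintegral_congr fun l => (ENNReal.ofReal_mul (Real.exp_pos _).le).symm
    _ = ENNReal.ofReal (c * Real.Gamma (m / k + 1) * s ^ (-(m / k))) := by
        congr 1
        have hI : ∀ l ∈ Set.Ioi (0:ℝ), Real.exp (-l) * (c * (l / s) ^ a)
            = (c * s ^ (-a)) * (Real.exp (-l) * l ^ a) := by
          intro l hl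
          have hl0 : (0:ℝ) < l := hl
          rw [Real.div_rpow hl0.le hs.le, Real.rpow_neg hs.le, div_eq_mul_inv]
          ring
        rw [setIntegral_congr_fun measurableSet_Ioi hI, integral_const_mul,
          Real.Gamma_eq_integral (show (0:ℝ) < a + 1 by linarith)]
        simp only [add_sub_cancel_right]
        ring
end

section
/- Let (X,𝒳,μ) be a measure space with μ(X) < ∞, (Y,𝒴) a measurable space, ρ : X × Y → [0,∞] a measurable distortion function, and k > 0, m > 0, c > 0, δ₀ ∈ (0,∞). If μ(B_{ρ^{1/k}}(y,δ)) ≤ c δ^m for all y ∈ Y and all δ ∈ (0,δ₀), then for every s > 0 and every y ∈ Y, ∫ e^{−s ρ(x,y)} dμ(x) ≤ c · s^{−m/k} · γ(m/k + 1, s δ₀^k) + μ(X) · e^{−s δ₀^k}. -/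
open MeasureTheory Real Set
open scoped ENNReal NNReal

/-- The lower incomplete gamma function `γ(a,s) = ∫₀^s t^{a-1} e^{-t} dt`. -/
noncomputable def lowerGamma (a s : ℝ) : ℝ :=
  ∫ t in (0:ℝ)..s, t ^ (a - 1) * Real.exp (-t)

lemma expNeg_eq (u : ℝ≥0∞) :
    expNeg u = ∫⁻ t in Ioi (0:ℝ),
      (if u < ENNReal.ofReal t then ENNReal.ofReal (Real.exp (-t)) else 0) := by
  by_cases hu : u = ⊤
  · have h : ∀ t : ℝ, (if u < ENNReal.ofReal t then ENNReal.ofReal (Real.exp (-t)) else 0) = 0 :=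
      fun t => if_neg (by simp [hu])
    simp [expNeg, hu, h]
  · have hcond : ∀ t : ℝ, (u < ENNReal.ofReal t) ↔ u.toReal < t :=
      fun t => ENNReal.lt_ofReal_iff_toReal_lt hu
    have h : ∀ t : ℝ, (if u < ENNReal.ofReal t then ENNReal.ofReal (Real.exp (-t)) else 0)
        = (Ioi u.toReal).indicator (fun t => ENNReal.ofReal (Real.exp (-t))) t := by
      intro t
      simp [Set.indicator_apply, mem_Ioi, hcond t]
    rw [lintegral_congr h, lintegral_indicator measurableSet_Ioi,
      Measure.restrict_restrict measurableSet_Ioi, Ioi_inter_Ioi,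
      max_eq_left ENNReal.toReal_nonneg]
    have hint : IntegrableOn (fun t : ℝ => Real.exp (-t)) (Ioi u.toReal) := by
      have := exp_neg_integrableOn_Ioi u.toReal (b := 1) one_pos
      simpa using this
    rw [← ofReal_integral_eq_lintegral_ofReal hint
      (ae_of_all _ fun t => (Real.exp_pos _).le), integral_exp_neg_Ioi]
    simp [expNeg, hu]

/-- If `μ(X) < ∞` and `μ(B_{ρ^{1/k}}(y,δ)) ≤ c δ^m` for all `y` and all
`δ ∈ (0,δ₀)`, then for all `s > 0` and `y`,
`∫ e^{-s ρ(x,y)} dμ(x) ≤ c s^{-m/k} γ(m/k + 1, s δ₀^k) + μ(X) e^{-s δ₀^k}`. -/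
theorem stmt3
    {X Y : Type*} [MeasurableSpace X] [MeasurableSpace Y]
    (μ : Measure X) (hμfin : μ Set.univ < ⊤)
    (ρ : X → Y → ℝ≥0∞) (hρ : Measurable (fun p : X × Y => ρ p.1 p.2))
    (k m : ℝ) (hk : 0 < k) (hm : 0 < m) (c δ₀ : ℝ) (hc : 0 < c) (hδ₀ : 0 < δ₀)
    (hsub : ∀ y : Y, ∀ δ : ℝ, 0 < δ → δ < δ₀ →
      μ {x | ρ x y < ENNReal.ofReal (δ ^ k)} ≤ ENNReal.ofReal (c * δ ^ m)) :
    ∀ s : ℝ, 0 < s → ∀ y : Y,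
      ∫⁻ x, expNeg (ENNReal.ofReal s * ρ x y) ∂μ ≤
        ENNReal.ofReal (c * s ^ (-(m / k)) * lowerGamma (m / k + 1) (s * δ₀ ^ k)
          + (μ Set.univ).toReal * Real.exp (-(s * δ₀ ^ k))) := by
  intro s hs y
  haveI : IsFiniteMeasure μ := ⟨hμfin⟩
  have ha0 : 0 < m / k := div_pos hm hk
  set T : ℝ := s * δ₀ ^ k with hTdef
  have hT0 : 0 < T := mul_pos hs (rpow_pos_of_pos hδ₀ k)
  have hρy : Measurable fun x => ρ x y :=
    hρ.comp (measurable_id.prodMk measurable_const)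
  set S : ℝ → Set X := fun t => {x | ENNReal.ofReal s * ρ x y < ENNReal.ofReal t} with hSdef
  have hSmeas : ∀ t, MeasurableSet (S t) := fun t =>
    measurableSet_lt (measurable_const.mul hρy) measurable_const
  -- Step 1 : rewrite the integral via Tonelli
  have step1 : ∫⁻ x, expNeg (ENNReal.ofReal s * ρ x y) ∂μ
      = ∫⁻ t in Ioi (0:ℝ), ENNReal.ofReal (Real.exp (-t)) * μ (S t) := by
    have h1 : ∫⁻ x, expNeg (ENNReal.ofReal s * ρ x y) ∂μ
        = ∫⁻ x, (∫⁻ t in Ioi (0:ℝ),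
          (if ENNReal.ofReal s * ρ x y < ENNReal.ofReal t then
            ENNReal.ofReal (Real.exp (-t)) else 0)) ∂μ :=
      lintegral_congr fun x => expNeg_eq _
    rw [h1]
    rw [lintegral_lintegral_swap]
    · refine lintegral_congr fun t => ?_
      have : ∀ x : X, (if ENNReal.ofReal s * ρ x y < ENNReal.ofReal t then
          ENNReal.ofReal (Real.exp (-t)) else 0)
          = (S t).indicator (fun _ => ENNReal.ofReal (Real.exp (-t))) x := by
        intro x; simp [Set.indicator_apply, hSdef, Set.mem_setOf_eq]
      rw [lintegral_congr this, lintegral_indicator_const (hSmeas t)]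
    · have hA : MeasurableSet {p : X × ℝ |
          ENNReal.ofReal s * ρ p.1 y < ENNReal.ofReal p.2} := by
        apply measurableSet_lt
        · exact (measurable_const.mul (hρy.comp measurable_fst))
        · exact ENNReal.measurable_ofReal.comp measurable_snd
      have : (Function.uncurry fun (x : X) (t : ℝ) =>
          (if ENNReal.ofReal s * ρ x y < ENNReal.ofReal t then
            ENNReal.ofReal (Real.exp (-t)) else 0))
          = {p : X × ℝ | ENNReal.ofReal s * ρ p.1 y < ENNReal.ofReal p.2}.indicator
              (fun p => ENNReal.ofReal (Real.exp (-p.2))) := by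
        funext p
        simp [Function.uncurry, Set.indicator_apply]
      rw [this]
      exact ((ENNReal.measurable_ofReal.comp
        (Real.measurable_exp.comp measurable_snd.neg)).indicator hA).aemeasurable
  rw [step1]
  -- Step 2 : split the domain
  have hsplit : Ioo (0:ℝ) T ∪ Ici T = Ioi 0 := by
    ext t
    simp only [mem_union, mem_Ioo, mem_Ici, mem_Ioi]
    constructor
    · rintro (⟨h, _⟩ | h)
      · exact h
      · exact hT0.trans_le h
    · intro h
      rcases lt_or_ge t T with h' | h'
      · exact Or.inl ⟨h, h'⟩
      · exact Or.inr h'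
  have hdisj : Disjoint (Ioo (0:ℝ) T) (Ici T) := by
    rw [Set.disjoint_left]
    rintro t ⟨_, h2⟩ h3
    exact absurd h3 (not_le.mpr h2)
  rw [← hsplit, lintegral_union measurableSet_Ici hdisj]
  -- Step 3 : bound on the ball measure for small t
  have key : ∀ t ∈ Ioo (0:ℝ) T, μ (S t) ≤ ENNReal.ofReal (c * (t / s) ^ (m / k)) := by
    intro t ht
    have ht0 : 0 < t := ht.1
    have hts : 0 < t / s := div_pos ht0 hs
    set δ : ℝ := (t / s) ^ (1 / k) with hδdef
    have hδpos : 0 < δ := rpow_pos_of_pos hts _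
    have hδk : δ ^ k = t / s := by
      rw [hδdef, ← Real.rpow_mul hts.le, one_div, inv_mul_cancel₀ hk.ne', Real.rpow_one]
    have hδlt : δ < δ₀ := by
      have h1 : t / s < δ₀ ^ k := by
        rw [div_lt_iff₀ hs]
        rw [hTdef] at ht
        linarith [ht.2]
      calc δ = (t / s) ^ (1 / k) := hδdef
        _ < (δ₀ ^ k) ^ (1 / k) := by
          exact Real.rpow_lt_rpow hts.le h1 (by positivity)
        _ = δ₀ := by
          rw [← Real.rpow_mul hδ₀.le, mul_one_div, div_self hk.ne', Real.rpow_one]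
    have hset : S t = {x | ρ x y < ENNReal.ofReal (δ ^ k)} := by
      ext x
      simp only [hSdef, mem_setOf_eq, hδk]
      rw [show ENNReal.ofReal t = ENNReal.ofReal s * ENNReal.ofReal (t / s) by
        rw [← ENNReal.ofReal_mul hs.le, mul_div_cancel₀ _ hs.ne']]
      exact ENNReal.mul_lt_mul_iff_right (by simpa using hs) ENNReal.ofReal_ne_top
    rw [hset]
    have hδm : δ ^ m = (t / s) ^ (m / k) := by
      rw [hδdef, ← Real.rpow_mul hts.le, one_div, inv_mul_eq_div]
    calc μ {x | ρ x y < ENNReal.ofReal (δ ^ k)} ≤ ENNReal.ofReal (c * δ ^ m) :=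
          hsub y δ hδpos hδlt
      _ = ENNReal.ofReal (c * (t / s) ^ (m / k)) := by rw [hδm]
  -- Step 4 : first integral
  have hmeasg : Measurable fun t : ℝ => c * (t / s) ^ (m / k) * Real.exp (-t) := by
    fun_prop
  have int1 : ∫⁻ t in Ioo (0:ℝ) T, ENNReal.ofReal (Real.exp (-t)) * μ (S t)
      ≤ ENNReal.ofReal (c * s ^ (-(m / k)) * lowerGamma (m / k + 1) T) := by
    have mono1 : ∫⁻ t in Ioo (0:ℝ) T, ENNReal.ofReal (Real.exp (-t)) * μ (S t)
        ≤ ∫⁻ t in Ioo (0:ℝ) T, ENNReal.ofReal (c * (t / s) ^ (m / k) * Real.exp (-t)) := by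
      apply setLIntegral_mono (hmeasg.ennreal_ofReal)
      intro t ht
      rw [show c * (t / s) ^ (m / k) * Real.exp (-t)
          = Real.exp (-t) * (c * (t / s) ^ (m / k)) by ring,
        ENNReal.ofReal_mul (Real.exp_pos _).le]
      exact mul_le_mul_right (key t ht) _
    refine mono1.trans (le_of_eq ?_)
    have hIntg : IntegrableOn (fun t => c * (t / s) ^ (m / k) * Real.exp (-t)) (Ioo 0 T) := by
      apply Measure.integrableOn_of_bounded (M := c * (T / s) ^ (m / k))
      · simp [Real.volume_Ioo]
      · exact hmeasg.aestronglyMeasurable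
      · refine ae_restrict_of_forall_mem measurableSet_Ioo fun t ht => ?_
        have ht0 : 0 < t := ht.1
        have h1 : (t / s) ^ (m / k) ≤ (T / s) ^ (m / k) :=
          Real.rpow_le_rpow (by positivity) (by gcongr; exact ht.2.le) ha0.le
        have h2 : Real.exp (-t) ≤ 1 := by
          rw [Real.exp_le_one_iff]; linarith
        rw [Real.norm_eq_abs, abs_of_nonneg (by positivity)]
        calc c * (t / s) ^ (m / k) * Real.exp (-t)
            ≤ c * (T / s) ^ (m / k) * 1 := by
              apply mul_le_mul (by gcongr) h2 (Real.exp_pos _).le (by positivity)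
          _ = c * (T / s) ^ (m / k) := mul_one _
    rw [← ofReal_integral_eq_lintegral_ofReal hIntg
      (ae_restrict_of_forall_mem measurableSet_Ioo fun t ht => by
        have ht0 : (0:ℝ) < t := ht.1
        positivity)]
    congr 1
    have e1 : ∫ t in Ioo (0:ℝ) T, c * (t / s) ^ (m / k) * Real.exp (-t)
        = ∫ t in Ioo (0:ℝ) T, (c * s ^ (-(m / k))) * (t ^ (m / k) * Real.exp (-t)) := by
      apply setIntegral_congr_fun measurableSet_Ioo
      intro t ht
      have ht0 : 0 < t := ht.1
      simp only []
      rw [Real.div_rpow ht0.le hs.le, Real.rpow_neg hs.le, div_eq_mul_inv]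
      ring
    rw [e1, integral_const_mul]
    congr 1
    rw [lowerGamma, intervalIntegral.integral_of_le hT0.le,
      ← integral_Ioc_eq_integral_Ioo]
    congr 1
    funext t
    rw [add_sub_cancel_right]
  -- Step 5 : second integral
  have int2 : ∫⁻ t in Ici T, ENNReal.ofReal (Real.exp (-t)) * μ (S t)
      ≤ μ Set.univ * ENNReal.ofReal (Real.exp (-T)) := by
    have mono2 : ∫⁻ t in Ici T, ENNReal.ofReal (Real.exp (-t)) * μ (S t)
        ≤ ∫⁻ t in Ici T, ENNReal.ofReal (Real.exp (-t)) * μ Set.univ := by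
      apply lintegral_mono
      intro t
      exact mul_le_mul_right (measure_mono (subset_univ _)) _
    refine mono2.trans (le_of_eq ?_)
    have hme : Measurable fun t : ℝ => ENNReal.ofReal (Real.exp (-t)) := by fun_prop
    rw [lintegral_mul_const _ hme]
    rw [mul_comm]
    congr 1
    have hIci : IntegrableOn (fun t : ℝ => Real.exp (-t)) (Ici T) := by
      rw [integrableOn_Ici_iff_integrableOn_Ioi]
      have := exp_neg_integrableOn_Ioi T (b := 1) one_pos
      simpa using this
    rw [← ofReal_integral_eq_lintegral_ofReal hIci (ae_of_all _ fun t => (Real.exp_pos _).le),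
      integral_Ici_eq_integral_Ioi, integral_exp_neg_Ioi]
  -- Step 6 : combine
  have hγ : 0 ≤ lowerGamma (m / k + 1) T := by
    rw [lowerGamma]
    apply intervalIntegral.integral_nonneg hT0.le
    intro t ht
    have : 0 ≤ t := ht.1
    positivity
  have hA : 0 ≤ c * s ^ (-(m / k)) * lowerGamma (m / k + 1) T := by positivity
  rw [ENNReal.ofReal_add hA (mul_nonneg ENNReal.toReal_nonneg (Real.exp_pos _).le),
    ENNReal.ofReal_mul ENNReal.toReal_nonneg, ENNReal.ofReal_toReal hμfin.ne]
  exact add_le_add int1 int2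
end

section
/- Let (X,𝒳,μ) be a measure space with μ(X) < ∞, (Y,𝒴) a measurable space, ρ : X × Y → [0,∞] a measurable distortion function, and k > 0, m > 0, c > 0, δ₀ ∈ (0,∞). If μ(B_{ρ^{1/k}}(y,δ)) ≤ c δ^m for all y ∈ Y and all δ ∈ (0,δ₀), then for every s > 0 and every y ∈ Y, ∫ e^{−(s/δ₀^k) ρ(x,y)} dμ(x) ≤ ( μ(X) Γ(m/k + 1) − (μ(X) − δ₀^m c) γ(m/k + 1, s) ) / s^{m/k}. -/
open MeasureTheory Real Set
open scoped ENNReal NNReal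

lemma aux_exp_integral (l a b : ℝ) :
    ∫ u in a..b, l * Real.exp (-(l * u)) = Real.exp (-(l * a)) - Real.exp (-(l * b)) := by
  have h : ∀ x ∈ Set.uIcc a b,
      HasDerivAt (fun u => -Real.exp (-(l * u))) (l * Real.exp (-(l * x))) x := by
    intro x _
    have h1 : HasDerivAt (fun u : ℝ => -(l * u)) (-l) x := by
      simpa [Pi.neg_def] using ((hasDerivAt_id x).const_mul l).neg
    have h2 := (Real.hasDerivAt_exp (-(l * x))).comp x h1
    have h3 := h2.neg
    exact h3.congr_deriv (by ring)
  have hint : IntervalIntegrable (fun u => l * Real.exp (-(l * u))) volume a b :=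
    (by continuity : Continuous fun u : ℝ => l * Real.exp (-(l * u))).intervalIntegrable a b
  rw [intervalIntegral.integral_eq_sub_of_hasDerivAt h hint]
  ring

lemma aux_gamma (a s : ℝ) (ha : 0 < a) (hs : 0 < s) :
    s ^ a * Real.exp (-s) + (∫ t in (0:ℝ)..s, t ^ a * Real.exp (-t)) ≤ Real.Gamma (a + 1) := by
  have hG : Real.Gamma (a+1) = ∫ x in Set.Ioi (0:ℝ), Real.exp (-x) * x ^ a := by
    rw [Real.Gamma_eq_integral (by linarith : (0:ℝ) < a + 1)]
    norm_num
  have hconv : IntegrableOn (fun x => Real.exp (-x) * x ^ a) (Set.Ioi (0:ℝ)) := by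
    have := Real.GammaIntegral_convergent (show (0:ℝ) < a + 1 by linarith)
    simpa using this
  have hsplit : (∫ x in Set.Ioi (0:ℝ), Real.exp (-x) * x ^ a)
      = (∫ x in Set.Ioc (0:ℝ) s, Real.exp (-x) * x ^ a)
        + ∫ x in Set.Ioi s, Real.exp (-x) * x ^ a := by
    rw [← MeasureTheory.setIntegral_union (Set.Ioc_disjoint_Ioi le_rfl) measurableSet_Ioi
      (hconv.mono_set Set.Ioc_subset_Ioi_self) (hconv.mono_set (Set.Ioi_subset_Ioi hs.le)),
      Set.Ioc_union_Ioi_eq_Ioi hs.le]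
  have h1 : (∫ t in (0:ℝ)..s, t ^ a * Real.exp (-t))
      = ∫ x in Set.Ioc (0:ℝ) s, Real.exp (-x) * x ^ a := by
    rw [intervalIntegral.integral_of_le hs.le]
    exact setIntegral_congr_fun measurableSet_Ioc (fun x _ => mul_comm _ _)
  have hexp : IntegrableOn (fun x : ℝ => Real.exp (-x)) (Set.Ioi s) := by
    have := exp_neg_integrableOn_Ioi s (show (0:ℝ) < 1 by norm_num)
    simpa using this
  have h2 : s ^ a * Real.exp (-s) ≤ ∫ x in Set.Ioi s, Real.exp (-x) * x ^ a := by
    have hmono : (∫ x in Set.Ioi s, Real.exp (-x) * s ^ a)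
        ≤ ∫ x in Set.Ioi s, Real.exp (-x) * x ^ a := by
      apply MeasureTheory.setIntegral_mono_on (hexp.mul_const _)
        (hconv.mono_set (Set.Ioi_subset_Ioi hs.le)) measurableSet_Ioi
      intro x hx
      have hx' : s ≤ x := le_of_lt hx
      exact mul_le_mul_of_nonneg_left (Real.rpow_le_rpow hs.le hx' ha.le) (Real.exp_pos _).le
    have hval : (∫ x in Set.Ioi s, Real.exp (-x) * s ^ a) = s ^ a * Real.exp (-s) := by
      rw [MeasureTheory.integral_mul_const, integral_exp_neg_Ioi]
      ring
    linarith
  rw [hG, hsplit]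
  linarith [h1]

lemma aux_pointwise (l T : ℝ) (hl : 0 < l) (hT : 0 < T) (v : ℝ≥0∞) :
    expNeg (ENNReal.ofReal l * v) ≤ ENNReal.ofReal (Real.exp (-(l * T)))
      + ∫⁻ u in Set.Ioo (0:ℝ) T,
          Set.indicator {u : ℝ | v < ENNReal.ofReal u}
            (fun u => ENNReal.ofReal (l * Real.exp (-(l * u)))) u := by
  by_cases hv : v = ⊤
  · have : ENNReal.ofReal l * v = ⊤ := by
      rw [hv]
      exact ENNReal.mul_top (by simpa using hl)
    simp [expNeg, this]
  · set r := v.toReal with hr_def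
    have hr : 0 ≤ r := ENNReal.toReal_nonneg
    have hvr : v = ENNReal.ofReal r := (ENNReal.ofReal_toReal hv).symm
    have hlhs : expNeg (ENNReal.ofReal l * v) = ENNReal.ofReal (Real.exp (-(l * r))) := by
      rw [hvr, ← ENNReal.ofReal_mul hl.le, expNeg, if_neg ENNReal.ofReal_ne_top,
        ENNReal.toReal_ofReal (by positivity)]
    rw [hlhs]
    rcases le_or_gt T r with hTr | hrT
    · refine le_trans ?_ le_self_add
      exact ENNReal.ofReal_le_ofReal (by
        apply Real.exp_le_exp.mpr
        nlinarith)
    · -- rewrite indicator set as Ioi r on Ioo 0 T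
      have hcongr : ∫⁻ u in Set.Ioo (0:ℝ) T,
            Set.indicator {u : ℝ | v < ENNReal.ofReal u}
              (fun u => ENNReal.ofReal (l * Real.exp (-(l * u)))) u
          = ∫⁻ u in Set.Ioo (0:ℝ) T,
            Set.indicator (Set.Ioi r)
              (fun u => ENNReal.ofReal (l * Real.exp (-(l * u)))) u := by
        apply setLIntegral_congr_fun measurableSet_Ioo
        intro u hu
        have hiff : v < ENNReal.ofReal u ↔ r < u := by
          rw [hvr]; exact ENNReal.ofReal_lt_ofReal_iff hu.1
        simp only [Set.indicator_apply, Set.mem_setOf_eq, Set.mem_Ioi, hiff]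
      rw [hcongr, lintegral_indicator measurableSet_Ioi,
        Measure.restrict_restrict measurableSet_Ioi]
      have hset : Set.Ioi r ∩ Set.Ioo (0:ℝ) T = Set.Ioo r T := by
        ext u
        simp only [Set.mem_inter_iff, Set.mem_Ioi, Set.mem_Ioo]
        constructor
        · rintro ⟨h1, _, h3⟩; exact ⟨h1, h3⟩
        · rintro ⟨h1, h2⟩; exact ⟨h1, lt_of_le_of_lt hr h1, h2⟩
      rw [hset]
      have hcont : Continuous fun u : ℝ => l * Real.exp (-(l * u)) :=
        continuous_const.mul (Real.continuous_exp.comp ((continuous_const.mul continuous_id).neg))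
      have hint : IntegrableOn (fun u => l * Real.exp (-(l * u))) (Set.Ioo r T) :=
        hcont.integrableOn_Icc.mono_set Set.Ioo_subset_Icc_self
      have hval : ∫⁻ u in Set.Ioo r T, ENNReal.ofReal (l * Real.exp (-(l * u)))
          = ENNReal.ofReal (Real.exp (-(l * r)) - Real.exp (-(l * T))) := by
        rw [← ofReal_integral_eq_lintegral_ofReal hint
          (Filter.Eventually.of_forall fun u => by positivity)]
        congr 1
        rw [← MeasureTheory.integral_Ioc_eq_integral_Ioo,
          ← intervalIntegral.integral_of_le hrT.le]
        exact aux_exp_integral l r T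
      rw [hval, ← ENNReal.ofReal_add (by positivity)
        (by nlinarith [Real.exp_le_exp.mpr (show -(l*T) ≤ -(l*r) by nlinarith)])]
      apply ENNReal.ofReal_le_ofReal
      linarith

/-- If `μ(X) < ∞` and `μ(B_{ρ^{1/k}}(y,δ)) ≤ c δ^m` for all `y` and all
`δ ∈ (0,δ₀)`, then for all `s > 0` and `y`,
`∫ e^{-(s/δ₀^k) ρ(x,y)} dμ(x) ≤ (μ(X) Γ(m/k+1) − (μ(X) − δ₀^m c) γ(m/k+1,s)) / s^{m/k}`. -/
theorem stmt5
    {X Y : Type*} [MeasurableSpace X] [MeasurableSpace Y]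
    (μ : Measure X) (hμfin : μ Set.univ < ⊤)
    (ρ : X → Y → ℝ≥0∞) (hρ : Measurable (fun p : X × Y => ρ p.1 p.2))
    (k m : ℝ) (hk : 0 < k) (hm : 0 < m) (c δ₀ : ℝ) (hc : 0 < c) (hδ₀ : 0 < δ₀)
    (hsub : ∀ y : Y, ∀ δ : ℝ, 0 < δ → δ < δ₀ →
      μ {x | ρ x y < ENNReal.ofReal (δ ^ k)} ≤ ENNReal.ofReal (c * δ ^ m)) :
    ∀ s : ℝ, 0 < s → ∀ y : Y,
      ∫⁻ x, expNeg (ENNReal.ofReal (s / δ₀ ^ k) * ρ x y) ∂μ ≤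
        ENNReal.ofReal
          (((μ Set.univ).toReal * Real.Gamma (m / k + 1)
              - ((μ Set.univ).toReal - δ₀ ^ m * c) * lowerGamma (m / k + 1) s)
            / s ^ (m / k)) := by
  intro s hs y
  haveI : IsFiniteMeasure μ := ⟨hμfin⟩
  set a : ℝ := m / k with ha_def
  have ha : 0 < a := div_pos hm hk
  set T : ℝ := δ₀ ^ k with hT_def
  have hT : 0 < T := Real.rpow_pos_of_pos hδ₀ k
  set l : ℝ := s / T with hl_def
  have hl : 0 < l := div_pos hs hT
  have hlT : l * T = s := div_mul_cancel₀ s hT.ne'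
  set M : ℝ := (μ Set.univ).toReal with hM_def
  have hM : 0 ≤ M := ENNReal.toReal_nonneg
  have hρy : Measurable fun x => ρ x y :=
    hρ.comp (measurable_id.prodMk measurable_const)
  -- slice sets measurable
  have hslice : ∀ u : ℝ, MeasurableSet {x | ρ x y < ENNReal.ofReal u} := fun u =>
    hρy (measurableSet_Iio (a := ENNReal.ofReal u))
  -- Step A: pointwise bound and lintegral_mono
  have stepA : ∫⁻ x, expNeg (ENNReal.ofReal (s / δ₀ ^ k) * ρ x y) ∂μ ≤
      ENNReal.ofReal (Real.exp (-(l * T))) * μ Set.univ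
        + ∫⁻ x, (∫⁻ u in Set.Ioo (0:ℝ) T,
            Set.indicator {u : ℝ | ρ x y < ENNReal.ofReal u}
              (fun u => ENNReal.ofReal (l * Real.exp (-(l * u)))) u) ∂μ := by
    calc ∫⁻ x, expNeg (ENNReal.ofReal (s / δ₀ ^ k) * ρ x y) ∂μ
        ≤ ∫⁻ x, (ENNReal.ofReal (Real.exp (-(l * T)))
            + ∫⁻ u in Set.Ioo (0:ℝ) T,
              Set.indicator {u : ℝ | ρ x y < ENNReal.ofReal u}
                (fun u => ENNReal.ofReal (l * Real.exp (-(l * u)))) u) ∂μ := by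
          apply lintegral_mono
          intro x
          exact aux_pointwise l T hl hT (ρ x y)
      _ = _ := by
          rw [lintegral_add_left measurable_const, lintegral_const]
  -- Step B: Tonelli
  have hSmeas : MeasurableSet {p : X × ℝ | ρ p.1 y < ENNReal.ofReal p.2} := by
    apply measurableSet_lt
    · exact hρ.comp (measurable_fst.prodMk measurable_const)
    · exact ENNReal.measurable_ofReal.comp measurable_snd
  have hgmeas : Measurable fun p : X × ℝ => ENNReal.ofReal (l * Real.exp (-(l * p.2))) := by
    apply Measurable.ennreal_ofReal
    exact (measurable_const.mul ((measurable_snd.const_mul l).neg.exp))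
  have stepB : ∫⁻ x, (∫⁻ u in Set.Ioo (0:ℝ) T,
        Set.indicator {u : ℝ | ρ x y < ENNReal.ofReal u}
          (fun u => ENNReal.ofReal (l * Real.exp (-(l * u)))) u) ∂μ
      = ∫⁻ u in Set.Ioo (0:ℝ) T,
          ENNReal.ofReal (l * Real.exp (-(l * u))) * μ {x | ρ x y < ENNReal.ofReal u} := by
    have hswap := MeasureTheory.lintegral_lintegral_swap
      (μ := μ) (ν := volume.restrict (Set.Ioo (0:ℝ) T))
      (f := fun x u => Set.indicator {p : X × ℝ | ρ p.1 y < ENNReal.ofReal p.2}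
        (fun p => ENNReal.ofReal (l * Real.exp (-(l * p.2)))) (x, u))
      (by
        apply Measurable.aemeasurable
        have : (Function.uncurry fun x u =>
            Set.indicator {p : X × ℝ | ρ p.1 y < ENNReal.ofReal p.2}
              (fun p => ENNReal.ofReal (l * Real.exp (-(l * p.2)))) (x, u))
            = Set.indicator {p : X × ℝ | ρ p.1 y < ENNReal.ofReal p.2}
              (fun p => ENNReal.ofReal (l * Real.exp (-(l * p.2)))) := by
          funext p
          rfl
        rw [this]
        exact hgmeas.indicator hSmeas)
    have heq1 : ∀ x, (∫⁻ u in Set.Ioo (0:ℝ) T,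
        Set.indicator {u : ℝ | ρ x y < ENNReal.ofReal u}
          (fun u => ENNReal.ofReal (l * Real.exp (-(l * u)))) u)
        = ∫⁻ u in Set.Ioo (0:ℝ) T,
            Set.indicator {p : X × ℝ | ρ p.1 y < ENNReal.ofReal p.2}
              (fun p => ENNReal.ofReal (l * Real.exp (-(l * p.2)))) (x, u) := by
      intro x
      apply lintegral_congr
      intro u
      simp only [Set.indicator_apply, Set.mem_setOf_eq]
    have heq2 : ∀ u : ℝ, (∫⁻ x, Set.indicator {p : X × ℝ | ρ p.1 y < ENNReal.ofReal p.2}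
          (fun p => ENNReal.ofReal (l * Real.exp (-(l * p.2)))) (x, u) ∂μ)
        = ENNReal.ofReal (l * Real.exp (-(l * u))) * μ {x | ρ x y < ENNReal.ofReal u} := by
      intro u
      have : ∀ x, Set.indicator {p : X × ℝ | ρ p.1 y < ENNReal.ofReal p.2}
            (fun p => ENNReal.ofReal (l * Real.exp (-(l * p.2)))) (x, u)
          = Set.indicator {x : X | ρ x y < ENNReal.ofReal u}
            (fun _ => ENNReal.ofReal (l * Real.exp (-(l * u)))) x := by
        intro x
        simp only [Set.indicator_apply, Set.mem_setOf_eq]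
      simp only [this]
      rw [lintegral_indicator_const (hslice u)]
    calc ∫⁻ x, (∫⁻ u in Set.Ioo (0:ℝ) T,
          Set.indicator {u : ℝ | ρ x y < ENNReal.ofReal u}
            (fun u => ENNReal.ofReal (l * Real.exp (-(l * u)))) u) ∂μ
        = ∫⁻ x, (∫⁻ u in Set.Ioo (0:ℝ) T,
            Set.indicator {p : X × ℝ | ρ p.1 y < ENNReal.ofReal p.2}
              (fun p => ENNReal.ofReal (l * Real.exp (-(l * p.2)))) (x, u)) ∂μ := by
          exact lintegral_congr heq1
      _ = ∫⁻ u in Set.Ioo (0:ℝ) T, (∫⁻ x, Set.indicator {p : X × ℝ | ρ p.1 y < ENNReal.ofReal p.2}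
            (fun p => ENNReal.ofReal (l * Real.exp (-(l * p.2)))) (x, u) ∂μ) := hswap
      _ = _ := by
          apply lintegral_congr
          exact heq2
  -- Step C: measure bound on the ball
  have hmeas_bound : ∀ u ∈ Set.Ioo (0:ℝ) T,
      μ {x | ρ x y < ENNReal.ofReal u} ≤ ENNReal.ofReal (c * u ^ a) := by
    intro u hu
    have hδpos : 0 < u ^ (1/k) := Real.rpow_pos_of_pos hu.1 _
    have hδlt : u ^ (1/k) < δ₀ := by
      have h := Real.rpow_lt_rpow hu.1.le hu.2 (by positivity : (0:ℝ) < 1/k)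
      rwa [hT_def, ← Real.rpow_mul hδ₀.le, mul_one_div, div_self hk.ne', Real.rpow_one] at h
    have h1 : (u ^ (1/k)) ^ k = u := by
      rw [← Real.rpow_mul hu.1.le, one_div, inv_mul_cancel₀ hk.ne', Real.rpow_one]
    have h2 : (u ^ (1/k)) ^ m = u ^ a := by
      rw [← Real.rpow_mul hu.1.le]
      congr 1
      rw [ha_def]
      ring
    have h := hsub y _ hδpos hδlt
    rwa [h1, h2] at h
  -- Step D: bound the u-integral
  have hconta : Continuous fun u : ℝ => u ^ a :=
    continuous_iff_continuousAt.2 fun x => Real.continuousAt_rpow_const x _ (Or.inr ha.le)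
  have hcontl : Continuous fun u : ℝ => l * Real.exp (-(l * u)) :=
    continuous_const.mul (Real.continuous_exp.comp ((continuous_const.mul continuous_id).neg))
  have hcontfull : Continuous fun u : ℝ => l * Real.exp (-(l * u)) * (c * u ^ a) :=
    hcontl.mul (continuous_const.mul hconta)
  have hintfull : IntegrableOn (fun u : ℝ => l * Real.exp (-(l * u)) * (c * u ^ a))
      (Set.Ioo (0:ℝ) T) :=
    hcontfull.integrableOn_Icc.mono_set Set.Ioo_subset_Icc_self
  have stepD : (∫⁻ u in Set.Ioo (0:ℝ) T,
        ENNReal.ofReal (l * Real.exp (-(l * u))) * μ {x | ρ x y < ENNReal.ofReal u})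
      ≤ ENNReal.ofReal (∫ u in Set.Ioo (0:ℝ) T, l * Real.exp (-(l * u)) * (c * u ^ a)) := by
    rw [ofReal_integral_eq_lintegral_ofReal hintfull
      ((ae_restrict_iff' measurableSet_Ioo).2 (Filter.Eventually.of_forall fun u hu => by
        have := hu.1
        positivity))]
    apply setLIntegral_mono' measurableSet_Ioo
    intro u hu
    rw [ENNReal.ofReal_mul (p := l * Real.exp (-(l * u))) (by positivity)]
    exact mul_le_mul_right (hmeas_bound u hu) _
  -- Step E: compute the real integral
  have hlow : lowerGamma (m / k + 1) s = ∫ t in (0:ℝ)..s, t ^ a * Real.exp (-t) := by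
    unfold lowerGamma
    norm_num [ha_def]
  have stepE : (∫ u in Set.Ioo (0:ℝ) T, l * Real.exp (-(l * u)) * (c * u ^ a))
      = c * (δ₀ ^ m / s ^ a) * lowerGamma (m / k + 1) s := by
    rw [← MeasureTheory.integral_Ioc_eq_integral_Ioo, ← intervalIntegral.integral_of_le hT.le]
    have hsub1 : ∀ u ∈ Set.uIcc (0:ℝ) T,
        l * Real.exp (-(l * u)) * (c * u ^ a)
          = (c * l ^ (-a) * l) * ((l * u) ^ a * Real.exp (-(l * u))) := by
      intro u hu
      rw [Set.uIcc_of_le hT.le] at hu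
      rw [Real.mul_rpow hl.le hu.1, Real.rpow_neg hl.le]
      field_simp
    rw [intervalIntegral.integral_congr hsub1, intervalIntegral.integral_const_mul]
    have hcomp := intervalIntegral.integral_comp_mul_left
      (fun t : ℝ => t ^ a * Real.exp (-t)) hl.ne'
      (a := (0:ℝ)) (b := T)
    rw [mul_zero, hlT] at hcomp
    rw [hcomp, hlow, smul_eq_mul]
    have hTa : T ^ a = δ₀ ^ m := by
      rw [hT_def, ← Real.rpow_mul hδ₀.le]
      congr 1
      rw [ha_def]
      field_simp
    have hla : l ^ (-a) = δ₀ ^ m / s ^ a := by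
      rw [hl_def, Real.rpow_neg (by positivity), Real.div_rpow hs.le hT.le, ← hTa, inv_div]
    rw [hla]
    field_simp
  -- Step F: final arithmetic
  have hγnonneg : 0 ≤ lowerGamma (m / k + 1) s := by
    rw [hlow]
    apply intervalIntegral.integral_nonneg hs.le
    intro t ht
    have : (0:ℝ) ≤ t := ht.1
    positivity
  have hkey : s ^ a * Real.exp (-s) + lowerGamma (m / k + 1) s ≤ Real.Gamma (a + 1) := by
    rw [hlow]
    exact aux_gamma a s ha hs
  have hsa : (0:ℝ) < s ^ a := Real.rpow_pos_of_pos hs _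
  have hreal : M * Real.exp (-s) + c * (δ₀ ^ m / s ^ a) * lowerGamma (m / k + 1) s
      ≤ (M * Real.Gamma (m / k + 1) - (M - δ₀ ^ m * c) * lowerGamma (m / k + 1) s) / s ^ a := by
    rw [le_div_iff₀ hsa]
    have hG : Real.Gamma (m / k + 1) = Real.Gamma (a + 1) := by rw [ha_def]
    rw [hG]
    have hexpand : (M * Real.exp (-s) + c * (δ₀ ^ m / s ^ a) * lowerGamma (m / k + 1) s) * s ^ a
        = M * Real.exp (-s) * s ^ a + c * δ₀ ^ m * lowerGamma (m / k + 1) s := by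
      field_simp
    rw [hexpand]
    nlinarith [mul_le_mul_of_nonneg_left hkey hM]
  calc ∫⁻ x, expNeg (ENNReal.ofReal (s / δ₀ ^ k) * ρ x y) ∂μ
      ≤ ENNReal.ofReal (Real.exp (-(l * T))) * μ Set.univ
        + ENNReal.ofReal (c * (δ₀ ^ m / s ^ a) * lowerGamma (m / k + 1) s) := by
        refine le_trans stepA (add_le_add_right ?_ _)
        rw [stepB]
        exact le_trans stepD (le_of_eq (by rw [stepE]))
    _ = ENNReal.ofReal (M * Real.exp (-s) + c * (δ₀ ^ m / s ^ a) * lowerGamma (m / k + 1) s) := by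
        rw [hlT, ← ENNReal.ofReal_toReal hμfin.ne, ← hM_def,
          ← ENNReal.ofReal_mul (Real.exp_pos _).le,
          ← ENNReal.ofReal_add (by positivity) (by positivity), mul_comm (Real.exp (-s)) M]
    _ ≤ _ := ENNReal.ofReal_le_ofReal hreal
end

section
/- Let X be a random variable with distribution μ_X on a measure space (X,𝒳,μ), where μ is σ-finite, μ_X ≪ μ, and the generalized entropy h_μ(X) := −∫ log(dμ_X/dμ) dμ_X is finite. Let (Y,𝒴) be a measurable space, ρ : X × Y → [0,∞] a measurable distortion function, and k > 0, m > 0, c > 0. Suppose μ(B_{ρ^{1/k}}(y,δ)) ≤ c δ^m for all y ∈ Y and all δ > 0. Then for every D > 0, h_μ(X) − inf_{s ≥ 0} ( s·D + log ν(s) ) ≥ h_μ(X) + (m/k) · log( m/(k·D) ) − log( c · Γ(m/k + 1) ) − m/k, where ν(s) := sup_{y∈Y} ∫ e^{−s ρ(x,y)} dμ(x). -/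
open MeasureTheory Real Set
open scoped ENNReal NNReal

private lemma lintegral_expNeg_repr (v : ℝ≥0∞) :
    ∫⁻ u in Ioi (0:ℝ), {u : ℝ | v < ENNReal.ofReal u}.indicator
      (fun u => ENNReal.ofReal (Real.exp (-u))) u = expNeg v := by
  rcases eq_or_ne v ⊤ with rfl | hv
  · have hempty : {u : ℝ | (⊤:ℝ≥0∞) < ENNReal.ofReal u} = ∅ := by
      ext u; simp
    simp [expNeg, hempty]
  · have hset : ∀ᵐ u ∂(volume : Measure ℝ), u ∈ Ioi (0:ℝ) →
        {u : ℝ | v < ENNReal.ofReal u}.indicator (fun u => ENNReal.ofReal (Real.exp (-u))) u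
          = (Ioi v.toReal).indicator (fun u => ENNReal.ofReal (Real.exp (-u))) u := by
      refine Filter.Eventually.of_forall fun u hu => ?_
      have hiff : u ∈ {u : ℝ | v < ENNReal.ofReal u} ↔ u ∈ Ioi v.toReal := by
        simp [ENNReal.lt_ofReal_iff_toReal_lt hv, mem_Ioi]
      by_cases hmem : u ∈ Ioi v.toReal
      · rw [indicator_of_mem (hiff.2 hmem), indicator_of_mem hmem]
      · rw [indicator_of_notMem (fun hx => hmem (hiff.1 hx)), indicator_of_notMem hmem]
    rw [setLIntegral_congr_fun_ae measurableSet_Ioi hset,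
      lintegral_indicator measurableSet_Ioi, Measure.restrict_restrict measurableSet_Ioi]
    have hI : Ioi v.toReal ∩ Ioi (0:ℝ) = Ioi v.toReal := by
      rw [Ioi_inter_Ioi, max_eq_left ENNReal.toReal_nonneg]
    rw [hI]
    have hint : IntegrableOn (fun u : ℝ => Real.exp (-u)) (Ioi v.toReal) := by
      simpa using exp_neg_integrableOn_Ioi v.toReal one_pos
    rw [← ofReal_integral_eq_lintegral_ofReal hint
        (Filter.Eventually.of_forall fun u => (Real.exp_pos _).le),
      integral_exp_neg_Ioi]
    simp [expNeg, hv]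

private lemma nu_bound {X Y : Type*} [MeasurableSpace X] [MeasurableSpace Y]
    (μ : Measure X) [SigmaFinite μ]
    (ρ : X → Y → ℝ≥0∞) (hρ : Measurable (fun p : X × Y => ρ p.1 p.2))
    (k m c : ℝ) (hk : 0 < k) (hm : 0 < m) (hc : 0 < c)
    (hsub : ∀ y : Y, ∀ δ : ℝ, 0 < δ →
      μ {x | ρ x y < ENNReal.ofReal (δ ^ k)} ≤ ENNReal.ofReal (c * δ ^ m))
    (s : ℝ) (hs : 0 < s) (y : Y) :
    ∫⁻ x, expNeg (ENNReal.ofReal s * ρ x y) ∂μ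
      ≤ ENNReal.ofReal (c * Real.Gamma (m / k + 1) * s ^ (-(m / k))) := by
  have hρy : Measurable fun x => ρ x y :=
    hρ.comp (measurable_id.prodMk measurable_const)
  set g : X → ℝ≥0∞ := fun x => ENNReal.ofReal s * ρ x y with hg
  have hgm : Measurable g := measurable_const.mul hρy
  set F : X → ℝ → ℝ≥0∞ := fun x u =>
    {p : X × ℝ | g p.1 < ENNReal.ofReal p.2}.indicator
      (fun p => ENNReal.ofReal (Real.exp (-p.2))) (x, u) with hF
  have hFm : Measurable (Function.uncurry F) := by
    have hset : MeasurableSet {p : X × ℝ | g p.1 < ENNReal.ofReal p.2} :=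
      measurableSet_lt (hgm.comp measurable_fst)
        (ENNReal.measurable_ofReal.comp measurable_snd)
    exact Measurable.indicator
      (ENNReal.measurable_ofReal.comp (Real.measurable_exp.comp measurable_snd.neg)) hset
  have hFeq : ∀ x, ∫⁻ u in Ioi (0:ℝ), F x u = expNeg (g x) := by
    intro x
    rw [← lintegral_expNeg_repr (g x)]
    refine lintegral_congr fun u => ?_
    simp only [hF, indicator_apply, mem_setOf_eq]
  have hinner : ∀ u : ℝ,
      ∫⁻ x, F x u ∂μ = ENNReal.ofReal (Real.exp (-u)) * μ {x | g x < ENNReal.ofReal u} := by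
    intro u
    have heq : ∀ x, F x u =
        {x : X | g x < ENNReal.ofReal u}.indicator
          (fun _ => ENNReal.ofReal (Real.exp (-u))) x := by
      intro x
      simp only [hF, indicator_apply, mem_setOf_eq]
    simp_rw [heq]
    rw [lintegral_indicator (measurableSet_lt hgm measurable_const), setLIntegral_const]
  have hμb : ∀ u : ℝ, 0 < u →
      μ {x | g x < ENNReal.ofReal u} ≤ ENNReal.ofReal (c * (u / s) ^ (m / k)) := by
    intro u hu
    have hus : 0 < u / s := div_pos hu hs
    set δ : ℝ := (u / s) ^ (1 / k) with hδdef
    have hδ : 0 < δ := Real.rpow_pos_of_pos hus _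
    have hδk : δ ^ k = u / s := by
      rw [hδdef, ← Real.rpow_mul hus.le, one_div_mul_cancel hk.ne', Real.rpow_one]
    have hδm : δ ^ m = (u / s) ^ (m / k) := by
      rw [hδdef, ← Real.rpow_mul hus.le]
      congr 1
      field_simp
    have hseteq : {x | g x < ENNReal.ofReal u} = {x | ρ x y < ENNReal.ofReal (δ ^ k)} := by
      ext x
      simp only [hg, mem_setOf_eq, hδk]
      rw [ENNReal.ofReal_div_of_pos hs,
        ENNReal.lt_div_iff_mul_lt (Or.inl (by simp [hs])) (Or.inl ENNReal.ofReal_ne_top),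
        mul_comm]
    calc μ {x | g x < ENNReal.ofReal u} = μ {x | ρ x y < ENNReal.ofReal (δ ^ k)} := by
          rw [hseteq]
      _ ≤ ENNReal.ofReal (c * δ ^ m) := hsub y δ hδ
      _ = ENNReal.ofReal (c * (u / s) ^ (m / k)) := by rw [hδm]
  have hC : (0:ℝ) ≤ c * s ^ (-(m / k)) :=
    mul_nonneg hc.le (Real.rpow_pos_of_pos hs _).le
  have hmeas : Measurable fun u : ℝ => ENNReal.ofReal (Real.exp (-u) * u ^ (m / k)) := by
    fun_prop
  have hGint : IntegrableOn (fun u : ℝ => Real.exp (-u) * u ^ (m / k)) (Ioi (0:ℝ)) := by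
    have := Real.GammaIntegral_convergent (show (0:ℝ) < m / k + 1 by positivity)
    simpa using this
  calc ∫⁻ x, expNeg (g x) ∂μ
      = ∫⁻ x, (∫⁻ u in Ioi (0:ℝ), F x u) ∂μ := by simp_rw [hFeq]
    _ = ∫⁻ u in Ioi (0:ℝ), ∫⁻ x, F x u ∂μ := lintegral_lintegral_swap hFm.aemeasurable
    _ = ∫⁻ u in Ioi (0:ℝ),
          ENNReal.ofReal (Real.exp (-u)) * μ {x | g x < ENNReal.ofReal u} := by
        simp_rw [hinner]
    _ ≤ ∫⁻ u in Ioi (0:ℝ),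
          ENNReal.ofReal (Real.exp (-u)) * ENNReal.ofReal (c * (u / s) ^ (m / k)) := by
        refine lintegral_mono_ae ?_
        filter_upwards [ae_restrict_mem measurableSet_Ioi] with u hu
        exact mul_le_mul_right (hμb u hu) _
    _ = ENNReal.ofReal (c * s ^ (-(m / k))) *
          ∫⁻ u in Ioi (0:ℝ), ENNReal.ofReal (Real.exp (-u) * u ^ (m / k)) := by
        rw [← lintegral_const_mul _ hmeas]
        refine setLIntegral_congr_fun_ae measurableSet_Ioi
          (Filter.Eventually.of_forall fun u hu => ?_)
        rw [← ENNReal.ofReal_mul (Real.exp_pos _).le, ← ENNReal.ofReal_mul hC]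
        congr 1
        have hdr : (u / s) ^ (m / k) = u ^ (m / k) * s ^ (-(m / k)) := by
          rw [Real.div_rpow (le_of_lt hu) hs.le, Real.rpow_neg hs.le, div_eq_mul_inv]
        rw [hdr]; ring
    _ = ENNReal.ofReal (c * s ^ (-(m / k))) * ENNReal.ofReal (Real.Gamma (m / k + 1)) := by
        congr 1
        have hnn : 0 ≤ᵐ[volume.restrict (Ioi (0:ℝ))]
            fun u : ℝ => Real.exp (-u) * u ^ (m / k) :=
          (ae_restrict_mem measurableSet_Ioi).mono fun u hu =>
            mul_nonneg (Real.exp_pos _).le (Real.rpow_nonneg (le_of_lt hu) _)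
        rw [← ofReal_integral_eq_lintegral_ofReal hGint hnn,
          Real.Gamma_eq_integral (show (0:ℝ) < m / k + 1 by positivity),
          add_sub_cancel_right]
    _ = ENNReal.ofReal (c * Real.Gamma (m / k + 1) * s ^ (-(m / k))) := by
        rw [← ENNReal.ofReal_mul hC]
        ring_nf

/-- For a random variable `X` with distribution `μX ≪ μ`, finite generalized
entropy `h = hμ(X)`, and a `ρ^{1/k}`-subregular reference measure `μ` of dimension `m` with
constants `c > 0` and `δ₀ = ∞`, the Shannon lower bound
`h − inf_{s ≥ 0}(sD + log ν(s))` is bounded below by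
`h + (m/k) log(m/(kD)) − log(c Γ(m/k+1)) − m/k` for every `D > 0`. -/
theorem stmt6
    {X Y : Type*} [MeasurableSpace X] [MeasurableSpace Y]
    (μ : Measure X) [SigmaFinite μ]
    (μX : Measure X) [IsProbabilityMeasure μX] (hac : μX ≪ μ)
    (h : ℝ)
    (hint : Integrable (fun x => Real.log (μX.rnDeriv μ x).toReal) μX)
    (hh : h = -∫ x, Real.log (μX.rnDeriv μ x).toReal ∂μX)
    (ρ : X → Y → ℝ≥0∞) (hρ : Measurable (fun p : X × Y => ρ p.1 p.2))
    (k m c : ℝ) (hk : 0 < k) (hm : 0 < m) (hc : 0 < c)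
    (hsub : ∀ y : Y, ∀ δ : ℝ, 0 < δ →
      μ {x | ρ x y < ENNReal.ofReal (δ ^ k)} ≤ ENNReal.ofReal (c * δ ^ m))
    (ν : ℝ → ℝ≥0∞)
    (hν : ∀ s : ℝ, ν s = ⨆ y : Y, ∫⁻ x, expNeg (ENNReal.ofReal s * ρ x y) ∂μ) :
    ∀ D : ℝ, 0 < D →
      (h : EReal) - ⨅ s : {s : ℝ // 0 ≤ s}, (((s : ℝ) * D : ℝ) : EReal) + ENNReal.log (ν s) ≥
        ((h + (m / k) * Real.log (m / (k * D))
            - Real.log (c * Real.Gamma (m / k + 1)) - m / k : ℝ) : EReal) := by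
  intro D hD
  have hΓ : 0 < Real.Gamma (m / k + 1) :=
    Real.Gamma_pos_of_pos (by positivity)
  set s₀ : ℝ := m / (k * D) with hs₀def
  have hs₀ : 0 < s₀ := div_pos hm (mul_pos hk hD)
  set R : ℝ := c * Real.Gamma (m / k + 1) * s₀ ^ (-(m / k)) with hRdef
  have hRpos : 0 < R := by
    have := Real.rpow_pos_of_pos hs₀ (-(m / k))
    positivity
  have hν' : ν s₀ ≤ ENNReal.ofReal R := by
    rw [hν]
    exact iSup_le fun y => nu_bound μ ρ hρ k m c hk hm hc hsub s₀ hs₀ y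
  have hlog : ENNReal.log (ν s₀) ≤ ((Real.log R : ℝ) : EReal) := by
    calc ENNReal.log (ν s₀) ≤ ENNReal.log (ENNReal.ofReal R) := ENNReal.log_monotone hν'
      _ = ((Real.log R : ℝ) : EReal) := ENNReal.log_ofReal_of_pos hRpos
  have h2 : ((s₀ * D : ℝ) : EReal) + ENNReal.log (ν s₀)
      ≤ (((s₀ * D) + Real.log R : ℝ) : EReal) := by
    rw [EReal.coe_add]
    exact add_le_add_right hlog _
  have hinf : (⨅ s : {s : ℝ // 0 ≤ s}, (((s : ℝ) * D : ℝ) : EReal) + ENNReal.log (ν s))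
      ≤ (((s₀ * D) + Real.log R : ℝ) : EReal) :=
    le_trans (iInf_le _ ⟨s₀, hs₀.le⟩) h2
  refine le_trans ?_ (EReal.sub_le_sub le_rfl hinf)
  rw [← EReal.coe_sub, EReal.coe_le_coe_iff]
  have hsD : s₀ * D = m / k := by
    rw [hs₀def]; field_simp
  have hlogR : Real.log R = Real.log (c * Real.Gamma (m / k + 1)) - (m / k) * Real.log s₀ := by
    rw [hRdef, Real.log_mul (by positivity) (Real.rpow_pos_of_pos hs₀ _).ne',
      Real.log_rpow hs₀]
    ring
  rw [hlogR, hsD, hs₀def]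
  exact le_of_eq (by ring)
end

section
/- Let X be a random variable on ℝ^d whose distribution μ_X is absolutely continuous with respect to Lebesgue measure λ^d with density f, and suppose the differential entropy h(X) := −∫ f(x) log f(x) dx is finite. Let ‖·‖ be a norm on ℝ^d with unit-ball Lebesgue measure V_d, let k > 0, and set ρ(x,y) := ‖x − y‖^k and ν(s) := sup_{y∈ℝ^d} ∫_{ℝ^d} e^{−s ρ(x,y)} dx. Then for every D > 0, h(X) − inf_{s ≥ 0} ( s·D + log ν(s) ) = h(X) + log( (d/(k·D))^{d/k} / ( V_d · Γ(d/k + 1) ) ) − d/k. -/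
open MeasureTheory Real Set
open scoped ENNReal NNReal

section aux
variable {d : ℕ} {N : (Fin d → ℝ) → ℝ}

lemma auxN0 (hs : ∀ (a : ℝ) (x : Fin d → ℝ), N (a • x) = |a| * N x) : N 0 = 0 := by
  have := hs 0 0; simpa using this

lemma auxNneg (hs : ∀ (a : ℝ) (x : Fin d → ℝ), N (a • x) = |a| * N x)
    (x : Fin d → ℝ) : N (-x) = N x := by
  have := hs (-1) x; simpa using this

lemma auxNnonneg (hs : ∀ (a : ℝ) (x : Fin d → ℝ), N (a • x) = |a| * N x)
    (hadd : ∀ x y : Fin d → ℝ, N (x + y) ≤ N x + N y) (x : Fin d → ℝ) : 0 ≤ N x := by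
  have h := hadd x (-x)
  rw [add_neg_cancel, auxN0 hs, auxNneg hs] at h
  linarith

lemma auxNupper (hs : ∀ (a : ℝ) (x : Fin d → ℝ), N (a • x) = |a| * N x)
    (hadd : ∀ x y : Fin d → ℝ, N (x + y) ≤ N x + N y) :
    ∃ C : ℝ, 0 < C ∧ ∀ x, N x ≤ C * ‖x‖ := by
  have hnn : ∀ x, 0 ≤ N x := auxNnonneg hs hadd
  have hsum : 0 ≤ ∑ i : Fin d, N (Pi.single i (1:ℝ)) := Finset.sum_nonneg fun i _ => hnn _
  refine ⟨(∑ i : Fin d, N (Pi.single i (1:ℝ))) + 1, by linarith, fun x => ?_⟩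
  have hx : x = ∑ i : Fin d, ((Pi.single i (x i) : Fin d → ℝ)) := by
    ext j
    simp [Finset.sum_apply, Pi.single_apply, mul_comm]
  calc N x = N (∑ i : Fin d, ((Pi.single i (x i) : Fin d → ℝ))) := by rw [← hx]
    _ ≤ ∑ i : Fin d, N (((Pi.single i (x i) : Fin d → ℝ))) :=
        Finset.le_sum_of_subadditive N (auxN0 hs).le hadd _ _
    _ = ∑ i : Fin d, |x i| * N (Pi.single i (1:ℝ)) := by
        refine Finset.sum_congr rfl fun i _ => ?_
        have e : (x i) • (Pi.single i (1:ℝ) : Fin d → ℝ) = Pi.single i (x i) := by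
          ext j; by_cases hj : j = i <;> simp [Pi.single_apply, hj]
        rw [← e, hs]
    _ ≤ ∑ i : Fin d, ‖x‖ * N (Pi.single i (1:ℝ)) := by
        refine Finset.sum_le_sum fun i _ => ?_
        have : |x i| ≤ ‖x‖ := by
          simpa [Real.norm_eq_abs] using norm_le_pi_norm x i
        exact mul_le_mul_of_nonneg_right this (hnn _)
    _ = (∑ i : Fin d, N (Pi.single i (1:ℝ))) * ‖x‖ := by rw [Finset.sum_mul]; exact Finset.sum_congr rfl fun i _ => mul_comm _ _
    _ ≤ ((∑ i : Fin d, N (Pi.single i (1:ℝ))) + 1) * ‖x‖ := by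
        have := norm_nonneg x; nlinarith

lemma auxNcont (hs : ∀ (a : ℝ) (x : Fin d → ℝ), N (a • x) = |a| * N x)
    (hadd : ∀ x y : Fin d → ℝ, N (x + y) ≤ N x + N y) : Continuous N := by
  obtain ⟨C, hC, hub⟩ := auxNupper hs hadd
  have key : ∀ x y : Fin d → ℝ, N x - N y ≤ C * ‖x - y‖ := by
    intro x y
    have := hadd (x - y) y
    rw [sub_add_cancel] at this
    have := hub (x - y)
    linarith
  have lip : LipschitzWith (Real.toNNReal C) N := by
    refine LipschitzWith.of_dist_le_mul fun x y => ?_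
    rw [Real.dist_eq, Real.coe_toNNReal _ hC.le, dist_eq_norm]
    rw [abs_sub_le_iff]
    refine ⟨key x y, ?_⟩
    have := key y x
    rwa [← norm_neg, neg_sub] at this
  exact lip.continuous

lemma auxNlower (hs : ∀ (a : ℝ) (x : Fin d → ℝ), N (a • x) = |a| * N x)
    (hadd : ∀ x y : Fin d → ℝ, N (x + y) ≤ N x + N y)
    (heq : ∀ x : Fin d → ℝ, N x = 0 → x = 0) (hd : 0 < d) :
    ∃ c : ℝ, 0 < c ∧ ∀ x, c * ‖x‖ ≤ N x := by
  have : Nontrivial (Fin d → ℝ) := by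
    refine ⟨Pi.single ⟨0, hd⟩ 1, 0, ?_⟩
    intro hcon
    have := congrFun hcon ⟨0, hd⟩
    simp [Pi.single_apply] at this
  have hcs : IsCompact (Metric.sphere (0 : Fin d → ℝ) 1) := isCompact_sphere _ _
  have hne : (Metric.sphere (0 : Fin d → ℝ) 1).Nonempty :=
    NormedSpace.sphere_nonempty.mpr zero_le_one
  obtain ⟨z, hz, hmin⟩ := hcs.exists_isMinOn hne (auxNcont hs hadd).continuousOn
  have hz1 : ‖z‖ = 1 := by simpa using hz
  have hzpos : 0 < N z := by
    rcases (auxNnonneg hs hadd z).lt_or_eq with h | h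
    · exact h
    · exfalso
      have := heq z h.symm
      rw [this] at hz1; simp at hz1
  refine ⟨N z, hzpos, fun x => ?_⟩
  rcases eq_or_ne x 0 with rfl | hx
  · simp [auxN0 hs]
  · have hxn : (0:ℝ) < ‖x‖ := norm_pos_iff.mpr hx
    have hmem : ‖x‖⁻¹ • x ∈ Metric.sphere (0 : Fin d → ℝ) 1 := by
      simp [norm_smul, abs_of_pos (inv_pos.mpr hxn), inv_mul_cancel₀ hxn.ne']
    have hmin' : N z ≤ N (‖x‖⁻¹ • x) := hmin hmem
    have : N (‖x‖⁻¹ • x) = ‖x‖⁻¹ * N x := by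
      rw [hs]; rw [abs_of_pos (inv_pos.mpr hxn)]
    rw [this] at hmin'
    calc N z * ‖x‖ ≤ (‖x‖⁻¹ * N x) * ‖x‖ := by nlinarith
      _ = N x := by field_simp

end aux
lemma auxInt1d {b p : ℝ} (hb : 0 < b) (hp : 0 < p) :
    Integrable (fun t : ℝ => Real.exp (-(b * |t| ^ p))) volume := by
  have hIoi : IntegrableOn (fun t : ℝ => Real.exp (-(b * t ^ p))) (Ioi 0) volume := by
    have hf : IntegrableOn (fun u : ℝ => u ^ (1/p - 1) * Real.exp (-b * u)) (Ioi 0) volume := by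
      have := integrableOn_rpow_mul_exp_neg_mul_rpow (p := 1) (s := 1/p - 1) (b := b)
        (by have := one_div_pos.mpr hp; linarith) zero_lt_one hb
      simpa using this
    have := (integrableOn_Ioi_comp_rpow_iff'
      (fun u : ℝ => u ^ (1/p - 1) * Real.exp (-b * u)) hp.ne').mpr hf
    refine this.congr_fun (fun x hx => ?_) measurableSet_Ioi
    have hx0 : (0:ℝ) < x := hx
    dsimp only
    rw [smul_eq_mul, ← Real.rpow_mul hx0.le, ← mul_assoc, ← Real.rpow_add hx0]
    have : p - 1 + p * (1/p - 1) = 0 := by field_simp; ring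
    rw [this, Real.rpow_zero, one_mul, neg_mul]
  have hIoi' : IntegrableOn (fun t : ℝ => Real.exp (-(b * |t| ^ p))) (Ioi 0) volume := by
    refine hIoi.congr_fun (fun x hx => ?_) measurableSet_Ioi
    rw [abs_of_pos hx]
  have hIio : IntegrableOn (fun t : ℝ => Real.exp (-(b * |t| ^ p))) (Iio 0) volume := by
    have hemb : MeasurableEmbedding (Neg.neg : ℝ → ℝ) := (Homeomorph.neg ℝ).measurableEmbedding
    have hmap : volume.restrict (Iio (0:ℝ)) =
        Measure.map Neg.neg (volume.restrict (Ioi (0:ℝ))) := by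
      have hpre : (Neg.neg : ℝ → ℝ) ⁻¹' (Iio 0) = Ioi 0 := by
        ext x; simp
      rw [← hpre, ← Measure.restrict_map measurable_neg measurableSet_Iio,
        Measure.map_neg_eq_self]
    rw [IntegrableOn, hmap, hemb.integrable_map_iff]
    refine hIoi'.congr_fun (fun x hx => ?_) measurableSet_Ioi
    simp [Function.comp, abs_neg]
  have hsing : IntegrableOn (fun t : ℝ => Real.exp (-(b * |t| ^ p))) {(0:ℝ)} volume := by
    rw [IntegrableOn, Measure.restrict_eq_zero.mpr (by simp)]
    exact integrable_zero_measure
  have := (hIio.union hIoi').union hsing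
  rw [Set.Iio_union_Ioi, Set.compl_union_self] at this
  exact integrableOn_univ.mp this

lemma auxIntd {d : ℕ} {N : (Fin d → ℝ) → ℝ} (hNc : Continuous N)
    {c : ℝ} (hc : 0 < c) (hlow : ∀ x, c * ‖x‖ ≤ N x)
    (hd : 0 < d) {k : ℝ} (hk : 0 < k) :
    Integrable (fun x : Fin d → ℝ => Real.exp (-(N x ^ k))) volume := by
  set b : ℝ := c ^ k / d with hbdef
  have hb : 0 < b := by
    have : (0:ℝ) < d := Nat.cast_pos.mpr hd
    positivity
  have hdom : Integrable (fun x : Fin d → ℝ => ∏ i : Fin d, Real.exp (-(b * |x i| ^ k)))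
      volume := Integrable.fintype_prod (𝕜 := ℝ) fun _ => auxInt1d hb hk
  refine hdom.mono' ?_ ?_
  · exact ((Real.measurable_exp.comp
      (hNc.measurable.pow_const (k : ℝ)).neg)).aestronglyMeasurable
  · filter_upwards with x
    rw [Real.norm_eq_abs, abs_of_pos (Real.exp_pos _), ← Real.exp_sum]
    apply Real.exp_le_exp.mpr
    have hsn : ∑ i : Fin d, -(b * |x i| ^ k) = -∑ i : Fin d, b * |x i| ^ k := by
      simp
    rw [hsn]
    apply neg_le_neg
    have h1 : ∑ i : Fin d, b * |x i| ^ k ≤ ∑ i : Fin d, b * ‖x‖ ^ k := by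
      refine Finset.sum_le_sum fun i _ => ?_
      refine mul_le_mul_of_nonneg_left ?_ hb.le
      exact Real.rpow_le_rpow (abs_nonneg _)
        (by simpa [Real.norm_eq_abs] using norm_le_pi_norm x i) hk.le
    have h2 : ∑ i : Fin d, b * ‖x‖ ^ k = c ^ k * ‖x‖ ^ k := by
      rw [Finset.sum_const, Finset.card_univ, Fintype.card_fin, nsmul_eq_mul, hbdef]
      have : (0:ℝ) < d := Nat.cast_pos.mpr hd
      field_simp
    have h3 : c ^ k * ‖x‖ ^ k ≤ N x ^ k := by
      rw [← Real.mul_rpow hc.le (norm_nonneg x)]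
      exact Real.rpow_le_rpow (by positivity) (hlow x) hk.le
    linarith


/-- For a continuous random variable on `ℝ^d` with density `f` and finite
differential entropy `h`, distortion `ρ(x,y) = N(x−y)^k` for a norm `N` with unit-ball
Lebesgue measure `V_d`, the Shannon lower bound is explicit:
`h − inf_{s ≥ 0}(sD + log ν(s)) = h + log((d/(kD))^{d/k} / (V_d Γ(d/k+1))) − d/k`. -/
theorem stmt10
    (d : ℕ) (N : (Fin d → ℝ) → ℝ)
    (hN_smul : ∀ (a : ℝ) (x : Fin d → ℝ), N (a • x) = |a| * N x)
    (hN_add : ∀ x y : Fin d → ℝ, N (x + y) ≤ N x + N y)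
    (hN_eq : ∀ x : Fin d → ℝ, N x = 0 → x = 0)
    (Vd : ℝ) (hVd : Vd = (volume {x : Fin d → ℝ | N x ≤ 1}).toReal)
    (k : ℝ) (hk : 0 < k)
    (μX : Measure (Fin d → ℝ)) [IsProbabilityMeasure μX]
    (f : (Fin d → ℝ) → ℝ) (hf_nonneg : ∀ x, 0 ≤ f x) (hf_meas : Measurable f)
    (hμX : μX = volume.withDensity (fun x => ENNReal.ofReal (f x)))
    (h : ℝ)
    (hint : Integrable (fun x => f x * Real.log (f x)) volume)
    (hh : h = -∫ x : Fin d → ℝ, f x * Real.log (f x))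
    (ν : ℝ → ℝ≥0∞)
    (hν : ∀ s : ℝ, ν s = ⨆ y : Fin d → ℝ,
      ∫⁻ x : Fin d → ℝ, ENNReal.ofReal (Real.exp (-(s * N (x - y) ^ k)))) :
    ∀ D : ℝ, 0 < D →
      (h : EReal) - ⨅ s : {s : ℝ // 0 ≤ s}, (((s : ℝ) * D : ℝ) : EReal) + ENNReal.log (ν s) =
        ((h + Real.log (((d : ℝ) / (k * D)) ^ ((d : ℝ) / k)
            / (Vd * Real.Gamma ((d : ℝ) / k + 1))) - (d : ℝ) / k : ℝ) : EReal) := by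
  intro D hD
  rcases Nat.eq_zero_or_pos d with hd0 | hd
  · -- degenerate case d = 0
    subst hd0
    have hxz : ∀ x : Fin 0 → ℝ, x = 0 := fun x => funext fun i => i.elim0
    have hvol : (volume : Measure (Fin 0 → ℝ)) Set.univ = 1 := by
      rw [volume_pi, Measure.pi_univ]
      simp
    have hν1 : ∀ s : ℝ, ν s = 1 := by
      intro s
      rw [hν]
      have hterm : ∀ y : Fin 0 → ℝ,
          (∫⁻ x : Fin 0 → ℝ, ENNReal.ofReal (Real.exp (-(s * N (x - y) ^ k)))) = 1 := by
        intro y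
        have : ∀ x : Fin 0 → ℝ, ENNReal.ofReal (Real.exp (-(s * N (x - y) ^ k))) = 1 := by
          intro x
          rw [hxz (x - y), auxN0 hN_smul, Real.zero_rpow hk.ne', mul_zero, neg_zero,
            Real.exp_zero, ENNReal.ofReal_one]
        simp only [this]
        rw [lintegral_one, hvol]
      simp only [hterm, iSup_const]
    have hlog1 : ∀ s : ℝ, ENNReal.log (ν s) = 0 := by
      intro s; rw [hν1, ENNReal.log_one]
    have hinf : (⨅ s : {s : ℝ // 0 ≤ s}, (((s : ℝ) * D : ℝ) : EReal) + ENNReal.log (ν s))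
        = (0 : EReal) := by
      apply le_antisymm
      · refine iInf_le_of_le ⟨0, le_rfl⟩ ?_
        rw [hlog1]
        simp
      · refine le_iInf ?_
        rintro ⟨s, hs⟩
        rw [hlog1, add_zero, ← EReal.coe_zero, EReal.coe_le_coe_iff]
        exact mul_nonneg hs hD.le
    rw [hinf, sub_zero]
    have hVd1 : Vd = 1 := by
      rw [hVd]
      have : {x : Fin 0 → ℝ | N x ≤ 1} = Set.univ := by
        ext x
        simp only [Set.mem_setOf_eq, Set.mem_univ, iff_true]
        rw [hxz x, auxN0 hN_smul]
        norm_num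
      rw [this, hvol]
      simp
    rw [hVd1]
    norm_num
  · -- main case 0 < d
    have hN0 := auxN0 hN_smul
    have hNneg := auxNneg hN_smul
    have hNnn := auxNnonneg hN_smul hN_add
    have hNc := auxNcont hN_smul hN_add
    have hNm : Measurable N := hNc.measurable
    haveI : Nonempty (Fin d) := ⟨⟨0, hd⟩⟩
    haveI : Nontrivial (Fin d → ℝ) := by
      refine ⟨Pi.single ⟨0, hd⟩ 1, 0, fun hcon => ?_⟩
      have := congrFun hcon ⟨0, hd⟩
      simp [Pi.single_apply] at this
    obtain ⟨c, hc, hlow⟩ := auxNlower hN_smul hN_add hN_eq hd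
    set γ : ℝ := (d : ℝ) / k with hγdef
    have hdpos : (0:ℝ) < d := Nat.cast_pos.mpr hd
    have hγ : 0 < γ := by positivity
    have hΓ : 0 < Real.Gamma (γ + 1) := Real.Gamma_pos_of_pos (by positivity)
    set I : ℝ := ∫ x : Fin d → ℝ, Real.exp (-(N x ^ k)) with hIdef
    have hfinrank : (Module.finrank ℝ (Fin d → ℝ) : ℝ) = (d : ℝ) := by
      rw [Module.finrank_fintype_fun_eq_card, Fintype.card_fin]
    -- the volume of the unit ball
    have hI : volume {x : Fin d → ℝ | N x < 1} = ENNReal.ofReal (I / Real.Gamma (γ + 1)) := by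
      have := measure_lt_one_eq_integral_div_gamma (volume : Measure (Fin d → ℝ))
        hN0 hNneg hN_add (fun hx => hN_eq _ hx)
        (fun r x => le_of_eq (hN_smul r x)) hk
      rw [this, hfinrank]
    have hIntI : Integrable (fun x : Fin d → ℝ => Real.exp (-(N x ^ k))) volume :=
      auxIntd hNc hc hlow hd hk
    have hIpos : 0 < I := by
      rw [hIdef, integral_pos_iff_support_of_nonneg (fun x => (Real.exp_pos _).le) hIntI]
      have : (Function.support fun x : Fin d → ℝ => Real.exp (-(N x ^ k))) = Set.univ := by
        ext x; simp [Function.mem_support, (Real.exp_pos _).ne']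
      rw [this]
      exact IsOpen.measure_pos volume isOpen_univ Set.univ_nonempty
    have hVd' : Vd = I / Real.Gamma (γ + 1) := by
      rw [hVd, measure_le_eq_lt (volume : Measure (Fin d → ℝ))
        hN0 hNneg hN_add (fun hx => hN_eq _ hx) (fun r x => le_of_eq (hN_smul r x)) 1,
        hI, ENNReal.toReal_ofReal (by positivity)]
    have hVdpos : 0 < Vd := by rw [hVd']; positivity
    have hIeq : I = Vd * Real.Gamma (γ + 1) := by rw [hVd']; field_simp
    -- the translated integrals
    set L : ℝ → ℝ≥0∞ :=
      fun s => ∫⁻ x : Fin d → ℝ, ENNReal.ofReal (Real.exp (-(s * N x ^ k))) with hLdef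
    have hν' : ∀ s : ℝ, ν s = L s := by
      intro s
      rw [hν]
      have hterm : ∀ y : Fin d → ℝ,
          (∫⁻ x : Fin d → ℝ, ENNReal.ofReal (Real.exp (-(s * N (x - y) ^ k)))) = L s := by
        intro y
        simpa [sub_eq_add_neg] using lintegral_add_right_eq_self (μ := volume)
          (fun x : Fin d → ℝ => ENNReal.ofReal (Real.exp (-(s * N x ^ k)))) (-y)
      simp only [hterm, iSup_const]
    have hL1 : L 1 = ENNReal.ofReal I := by
      rw [hLdef]
      simp only [one_mul]
      rw [← ofReal_integral_eq_lintegral_ofReal hIntI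
        (Filter.Eventually.of_forall fun x => (Real.exp_pos _).le)]
    have hg : Measurable (fun x : Fin d → ℝ => ENNReal.ofReal (Real.exp (-(N x ^ k)))) :=
      (Real.measurable_exp.comp (hNm.pow_const k).neg).ennreal_ofReal
    have hLs : ∀ s : ℝ, 0 < s → L s = ENNReal.ofReal (s ^ (-γ) * I) := by
      intro s hs
      set a : ℝ := s ^ (1/k) with hadef
      have ha0 : 0 < a := Real.rpow_pos_of_pos hs _
      have hak : a ^ k = s := by
        rw [hadef, ← Real.rpow_mul hs.le, one_div_mul_cancel hk.ne', Real.rpow_one]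
      have hpt : ∀ x : Fin d → ℝ, s * N x ^ k = N (a • x) ^ k := by
        intro x
        rw [hN_smul, abs_of_pos ha0, Real.mul_rpow ha0.le (hNnn x), hak]
      have step1 : L s = ∫⁻ x : Fin d → ℝ,
          (fun z : Fin d → ℝ => ENNReal.ofReal (Real.exp (-(N z ^ k)))) (a • x) := by
        rw [hLdef]
        refine lintegral_congr fun x => ?_
        rw [hpt x]
      have step2 : (∫⁻ x : Fin d → ℝ,
          (fun z : Fin d → ℝ => ENNReal.ofReal (Real.exp (-(N z ^ k)))) (a • x))
          = ∫⁻ z : Fin d → ℝ, ENNReal.ofReal (Real.exp (-(N z ^ k)))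
              ∂(Measure.map (fun x : Fin d → ℝ => a • x) volume) :=
        (lintegral_map hg (measurable_const_smul a)).symm
      have habs : |((a : ℝ) ^ (Module.finrank ℝ (Fin d → ℝ)))⁻¹| = s ^ (-γ) := by
        have hpow : (a : ℝ) ^ (Module.finrank ℝ (Fin d → ℝ)) = s ^ γ := by
          rw [← Real.rpow_natCast a, hadef, ← Real.rpow_mul hs.le]
          rw [Module.finrank_fintype_fun_eq_card, Fintype.card_fin]
          congr 1
          rw [hγdef]
          field_simp
        rw [hpow, abs_of_nonneg (by positivity), ← Real.rpow_neg hs.le]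
      rw [step1, step2, Measure.map_addHaar_smul volume ha0.ne', lintegral_smul_measure,
        habs]
      have : (∫⁻ z : Fin d → ℝ, ENNReal.ofReal (Real.exp (-(N z ^ k)))) = L 1 := by
        rw [hLdef]; simp only [one_mul]
      rw [this, hL1, ENNReal.ofReal_mul (by positivity), smul_eq_mul]
    have hν0 : ν 0 = ⊤ := by
      rw [hν', hLdef]
      have : ∀ x : Fin d → ℝ, ENNReal.ofReal (Real.exp (-((0:ℝ) * N x ^ k))) = 1 := by
        intro x; rw [zero_mul, neg_zero, Real.exp_zero, ENNReal.ofReal_one]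
      simp only [this]
      rw [lintegral_one, volume_pi, Measure.pi_univ]
      simp only [Real.volume_univ, Finset.prod_const, Finset.card_univ, Fintype.card_fin]
      exact ENNReal.top_pow hd.ne'
    have hνval : ∀ s : ℝ, 0 < s →
        ENNReal.log (ν s) = ((Real.log (s ^ (-γ) * I) : ℝ) : EReal) := by
      intro s hs
      rw [hν', hLs s hs, ENNReal.log_ofReal_of_pos (by positivity)]
    set m : ℝ := γ + Real.log I - γ * Real.log (γ / D) with hmdef
    have hs₀ : 0 < γ / D := by positivity
    have hinf : (⨅ s : {s : ℝ // 0 ≤ s}, (((s : ℝ) * D : ℝ) : EReal) + ENNReal.log (ν s))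
        = ((m : ℝ) : EReal) := by
      apply le_antisymm
      · refine iInf_le_of_le ⟨γ / D, hs₀.le⟩ ?_
        rw [hνval _ hs₀, ← EReal.coe_add]
        rw [EReal.coe_le_coe_iff]
        apply le_of_eq
        rw [Real.log_mul (Real.rpow_pos_of_pos hs₀ _).ne' hIpos.ne', Real.log_rpow hs₀,
          hmdef]
        have : γ / D * D = γ := by field_simp
        rw [this]
        ring
      · refine le_iInf ?_
        rintro ⟨s, hs0⟩
        rcases hs0.eq_or_lt with heq | hpos
        · simp only [← heq]
          rw [hν0, ENNReal.log_top, EReal.coe_add_top]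
          exact le_top
        · rw [hνval s hpos, ← EReal.coe_add, EReal.coe_le_coe_iff]
          rw [Real.log_mul (Real.rpow_pos_of_pos hpos _).ne' hIpos.ne',
            Real.log_rpow hpos, hmdef]
          have hlog : Real.log (s / (γ / D)) ≤ s / (γ / D) - 1 :=
            Real.log_le_sub_one_of_pos (by positivity)
          rw [Real.log_div hpos.ne' hs₀.ne'] at hlog
          have e : γ * (s / (γ / D)) = s * D := by field_simp
          nlinarith [mul_le_mul_of_nonneg_left hlog hγ.le]
    rw [hinf, ← EReal.coe_sub, EReal.coe_eq_coe_iff]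
    have hbase : ((d : ℝ) / (k * D)) = γ / D := by rw [hγdef]; field_simp
    rw [hbase]
    rw [Real.log_div (Real.rpow_pos_of_pos hs₀ _).ne' (by positivity : (0:ℝ) < Vd * Real.Gamma (γ + 1)).ne',
      Real.log_rpow hs₀, ← hIeq, hmdef]
    ring
end

section
/- Let S¹ := {y ∈ ℝ² : ‖y‖₂ = 1} denote the unit circle, let ℋ¹ denote the 1-dimensional Hausdorff measure on ℝ², and let μ_X := ℋ¹|_{S¹} / (2π) be the uniform distribution on S¹. Then for every δ̂ ∈ (0,1], every δ ∈ (0, δ̂), and every x ∈ ℝ², μ_X( { y ∈ ℝ² : ‖y − x‖₂ ≤ δ } ) ≤ ( arcsin(δ̂) / (π · δ̂) ) · δ. In particular, μ_X is subregular of dimension 1 with constants δ₀ = δ̂ and c = arcsin(δ̂)/(π δ̂) for the distortion function ρ(x,y) = ‖x − y‖₂². -/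
open MeasureTheory Real Set
open scoped ENNReal NNReal

noncomputable def circ (θ : ℝ) : EuclideanSpace ℝ (Fin 2) := WithLp.toLp 2 ![Real.cos θ, Real.sin θ]

lemma circ_zero (θ : ℝ) : circ θ 0 = Real.cos θ := rfl
lemma circ_one (θ : ℝ) : circ θ 1 = Real.sin θ := rfl

lemma circ_lipschitz : LipschitzWith 1 circ := by
  apply LipschitzWith.of_dist_le_mul
  intro a b
  rw [NNReal.coe_one, one_mul, EuclideanSpace.dist_eq, Real.dist_eq]
  have key : ∑ i, dist (circ a i) (circ b i) ^ 2 ≤ (a - b) ^ 2 := by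
    rw [Fin.sum_univ_two, circ_zero, circ_one, circ_zero, circ_one, Real.dist_eq, Real.dist_eq,
      sq_abs, sq_abs]
    have h1 : Real.cos a * Real.cos b + Real.sin a * Real.sin b = Real.cos (a - b) :=
      (Real.cos_sub a b).symm
    have h2 : Real.cos (2 * ((a - b) / 2)) = 2 * Real.cos ((a - b) / 2) ^ 2 - 1 :=
      Real.cos_two_mul _
    have h3 : Real.sin ((a - b) / 2) ^ 2 + Real.cos ((a - b) / 2) ^ 2 = 1 :=
      Real.sin_sq_add_cos_sq _
    have h4 : Real.sin ((a - b) / 2) ^ 2 ≤ ((a - b) / 2) ^ 2 := Real.sin_sq_le_sq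
    have h5 : Real.sin a ^ 2 + Real.cos a ^ 2 = 1 := Real.sin_sq_add_cos_sq a
    have h6 : Real.sin b ^ 2 + Real.cos b ^ 2 = 1 := Real.sin_sq_add_cos_sq b
    have h7 : 2 * ((a - b) / 2) = a - b := by ring
    rw [h7] at h2
    nlinarith [h1, h2, h3, h4, h5, h6]
  calc √(∑ i, dist (circ a i) (circ b i) ^ 2) ≤ √((a - b) ^ 2) := Real.sqrt_le_sqrt key
    _ = |a - b| := Real.sqrt_sq_eq_abs _

lemma norm_sq_eq (y : EuclideanSpace ℝ (Fin 2)) : ‖y‖ ^ 2 = y 0 ^ 2 + y 1 ^ 2 := by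
  rw [EuclideanSpace.norm_eq, Real.sq_sqrt (by positivity)]
  simp [Fin.sum_univ_two, sq_abs]

lemma exists_phi {c s : ℝ} (hcs : c ^ 2 + s ^ 2 = 1) :
    ∃ φ : ℝ, Real.cos φ = c ∧ Real.sin φ = s := by
  have hc1 : -1 ≤ c ∧ c ≤ 1 := by
    constructor <;> nlinarith [sq_nonneg s, sq_nonneg (c - 1), sq_nonneg (c + 1)]
  by_cases h : 0 ≤ s
  · refine ⟨Real.arccos c, Real.cos_arccos hc1.1 hc1.2, ?_⟩
    rw [Real.sin_arccos]
    have h1 : 1 - c ^ 2 = s ^ 2 := by linarith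
    rw [h1, Real.sqrt_sq h]
  · push_neg at h
    refine ⟨-Real.arccos c, by rw [Real.cos_neg]; exact Real.cos_arccos hc1.1 hc1.2, ?_⟩
    rw [Real.sin_neg, Real.sin_arccos]
    have h1 : 1 - c ^ 2 = s ^ 2 := by linarith
    rw [h1, Real.sqrt_sq_eq_abs, abs_of_nonpos h.le, neg_neg]

lemma exists_psi {c s y0 y1 r δ : ℝ} (hδ0 : 0 < δ) (hδ1 : δ < 1)
    (hcs : c ^ 2 + s ^ 2 = 1) (hy : y0 ^ 2 + y1 ^ 2 = 1) (hr : 0 < r)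
    (hd : (y0 - r * c) ^ 2 + (y1 - r * s) ^ 2 ≤ δ ^ 2) :
    ∃ ψ : ℝ, -Real.arcsin δ ≤ ψ ∧ ψ ≤ Real.arcsin δ ∧
      Real.cos ψ = y0 * c + y1 * s ∧ Real.sin ψ = y1 * c - y0 * s := by
  have hu : (y0 * c + y1 * s) ^ 2 + (y1 * c - y0 * s) ^ 2 = 1 := by
    have h : (y0 * c + y1 * s) ^ 2 + (y1 * c - y0 * s) ^ 2
        = (y0 ^ 2 + y1 ^ 2) * (c ^ 2 + s ^ 2) := by ring
    rw [h, hy, hcs, one_mul]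
  have hqsq : Real.sqrt (1 - δ ^ 2) ^ 2 = 1 - δ ^ 2 := Real.sq_sqrt (by nlinarith)
  have hq0 : 0 ≤ Real.sqrt (1 - δ ^ 2) := Real.sqrt_nonneg _
  have hu0q : Real.sqrt (1 - δ ^ 2) ≤ y0 * c + y1 * s := by
    have expand : (y0 - r * c) ^ 2 + (y1 - r * s) ^ 2
        = (y0 ^ 2 + y1 ^ 2) - 2 * r * (y0 * c + y1 * s) + r ^ 2 * (c ^ 2 + s ^ 2) := by ring
    have h2 : 1 - 2 * r * (y0 * c + y1 * s) + r ^ 2 ≤ δ ^ 2 := by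
      rw [expand, hy, hcs, mul_one] at hd; linarith
    nlinarith [h2, sq_nonneg (r - Real.sqrt (1 - δ ^ 2)), hqsq, hr]
  have hu1δ : -δ ≤ y1 * c - y0 * s ∧ y1 * c - y0 * s ≤ δ := by
    constructor <;> nlinarith [hu, hu0q, hqsq, hq0]
  have hu1le : -1 ≤ y1 * c - y0 * s ∧ y1 * c - y0 * s ≤ 1 :=
    ⟨by linarith [hu1δ.1], by linarith [hu1δ.2]⟩
  refine ⟨Real.arcsin (y1 * c - y0 * s), ?_, ?_, ?_, Real.sin_arcsin hu1le.1 hu1le.2⟩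
  · rw [← Real.arcsin_neg]
    exact Real.monotone_arcsin hu1δ.1
  · exact Real.monotone_arcsin hu1δ.2
  · rw [Real.cos_arcsin]
    have h1 : 1 - (y1 * c - y0 * s) ^ 2 = (y0 * c + y1 * s) ^ 2 := by linarith [hu]
    rw [h1, Real.sqrt_sq (le_trans hq0 hu0q)]

lemma subset_arc {x : EuclideanSpace ℝ (Fin 2)} {δ : ℝ} (hδ0 : 0 < δ) (hδ1 : δ < 1)
    (hx : x ≠ 0) :
    ∃ φ : ℝ, {y : EuclideanSpace ℝ (Fin 2) | ‖y - x‖ ≤ δ} ∩ {y | ‖y‖ = 1} ⊆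
      circ '' Icc (φ - Real.arcsin δ) (φ + Real.arcsin δ) := by
  have hr0 : (0 : ℝ) < ‖x‖ := norm_pos_iff.2 hx
  have hrsq : ‖x‖ ^ 2 = x 0 ^ 2 + x 1 ^ 2 := norm_sq_eq x
  have hcs : (x 0 / ‖x‖) ^ 2 + (x 1 / ‖x‖) ^ 2 = 1 := by
    field_simp
    linarith
  obtain ⟨φ, hcosφ, hsinφ⟩ := exists_phi hcs
  have hx0 : x 0 = ‖x‖ * (x 0 / ‖x‖) := by field_simp
  have hx1 : x 1 = ‖x‖ * (x 1 / ‖x‖) := by field_simp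
  refine ⟨φ, ?_⟩
  rintro y ⟨hyA, hyN⟩
  simp only [mem_setOf_eq] at hyA hyN
  have hy : y 0 ^ 2 + y 1 ^ 2 = 1 := by
    have h := norm_sq_eq y; rw [hyN] at h; linarith
  have hdist : (y 0 - ‖x‖ * (x 0 / ‖x‖)) ^ 2 + (y 1 - ‖x‖ * (x 1 / ‖x‖)) ^ 2 ≤ δ ^ 2 := by
    rw [← hx0, ← hx1]
    have h1 : ‖y - x‖ ^ 2 = (y 0 - x 0) ^ 2 + (y 1 - x 1) ^ 2 := by
      have h := norm_sq_eq (y - x); simpa using h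
    calc (y 0 - x 0) ^ 2 + (y 1 - x 1) ^ 2 = ‖y - x‖ ^ 2 := h1.symm
      _ ≤ δ ^ 2 := pow_le_pow_left₀ (norm_nonneg _) hyA 2
  obtain ⟨ψ, hψ1, hψ2, hcosψ, hsinψ⟩ := exists_psi hδ0 hδ1 hcs hy hr0 hdist
  refine ⟨φ + ψ, ⟨by linarith, by linarith⟩, ?_⟩
  have h0 : circ (φ + ψ) 0 = y 0 := by
    rw [circ_zero, Real.cos_add, hcosφ, hsinφ, hcosψ, hsinψ]
    linear_combination (y 0) * hcs
  have h1 : circ (φ + ψ) 1 = y 1 := by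
    rw [circ_one, Real.sin_add, hcosφ, hsinφ, hcosψ, hsinψ]
    linear_combination (y 1) * hcs
  ext i
  fin_cases i
  · exact h0
  · exact h1

lemma arcsin_mul_le {δ δhat : ℝ} (hδ0 : 0 < δ) (hδδ : δ < δhat) (hδhat1 : δhat ≤ 1) :
    Real.arcsin δ * δhat ≤ Real.arcsin δhat * δ := by
  have hδhat0 : 0 < δhat := lt_trans hδ0 hδδ
  set t : ℝ := Real.arcsin δhat with htdef
  have hsint : Real.sin t = δhat := Real.sin_arcsin (by linarith) hδhat1
  have ht0 : 0 ≤ t := Real.arcsin_nonneg.2 hδhat0.le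
  have htπ : t ≤ π / 2 := Real.arcsin_le_pi_div_two _
  set a : ℝ := δ / δhat with hadef
  have ha0 : 0 ≤ a := by positivity
  have ha1 : a ≤ 1 := by rw [hadef, div_le_one hδhat0]; linarith
  have hconc := strictConcaveOn_sin_Icc.concaveOn.2
    (mem_Icc.2 ⟨le_rfl, Real.pi_pos.le⟩)
    (mem_Icc.2 ⟨ht0, by linarith [Real.pi_pos]⟩)
    (by linarith : (0:ℝ) ≤ 1 - a) ha0 (by ring)
  simp only [smul_eq_mul, mul_zero, zero_add, Real.sin_zero] at hconc
  -- hconc : (1 - a) * 0 + a * sin t ≤ sin (a * t) (roughly)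
  have hkey : δ ≤ Real.sin (a * t) := by
    have : a * Real.sin t = δ := by
      rw [hsint, hadef]; field_simp
    calc δ = a * Real.sin t := this.symm
      _ ≤ Real.sin (a * t) := by linarith [hconc]
  have hat : Real.arcsin δ ≤ a * t := by
    calc Real.arcsin δ ≤ Real.arcsin (Real.sin (a * t)) := Real.monotone_arcsin hkey
      _ = a * t := Real.arcsin_sin
        (by nlinarith [Real.pi_pos, mul_nonneg ha0 ht0])
        (by nlinarith [ht0, ha1, htπ, ha0])
  have haδ : a * δhat = δ := by rw [hadef]; field_simp
  nlinarith [mul_le_mul_of_nonneg_right hat hδhat0.le, haδ]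

/-- Let `μX = ℋ¹|_{S¹} / (2π)` be the uniform distribution on the unit
circle `S¹ ⊆ ℝ²`. Then for every `δ̂ ∈ (0,1]`, every `δ ∈ (0,δ̂)`, and every `x ∈ ℝ²`,
`μX({y : ‖y − x‖₂ ≤ δ}) ≤ (arcsin δ̂ / (π δ̂)) δ`; i.e. `μX` is subregular of dimension 1
with constants `δ₀ = δ̂` and `c = arcsin δ̂ / (π δ̂)` for `ρ(x,y) = ‖x − y‖₂²`. -/
theorem stmt14
    (μX : Measure (EuclideanSpace ℝ (Fin 2)))
    (hμX : μX = (ENNReal.ofReal (2 * Real.pi))⁻¹ •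
      (μH[1].restrict {y : EuclideanSpace ℝ (Fin 2) | ‖y‖ = 1})) :
    ∀ δhat : ℝ, 0 < δhat → δhat ≤ 1 → ∀ δ : ℝ, 0 < δ → δ < δhat →
      ∀ x : EuclideanSpace ℝ (Fin 2),
        μX {y : EuclideanSpace ℝ (Fin 2) | ‖y - x‖ ≤ δ} ≤
          ENNReal.ofReal (Real.arcsin δhat / (Real.pi * δhat) * δ) := by
  intro δhat hδhat0 hδhat1 δ hδ0 hδδ x
  have hδ1 : δ < 1 := lt_of_lt_of_le hδδ hδhat1
  have hπ : (0:ℝ) < π := Real.pi_pos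
  have hmeas : MeasurableSet {y : EuclideanSpace ℝ (Fin 2) | ‖y - x‖ ≤ δ} :=
    (isClosed_le ((continuous_id.sub continuous_const).norm) continuous_const).measurableSet
  rw [hμX, Measure.smul_apply, smul_eq_mul, Measure.restrict_apply hmeas]
  have harc : μH[1] ({y : EuclideanSpace ℝ (Fin 2) | ‖y - x‖ ≤ δ} ∩ {y | ‖y‖ = 1})
      ≤ ENNReal.ofReal (2 * Real.arcsin δ) := by
    by_cases hx : x = 0
    · have hempty : {y : EuclideanSpace ℝ (Fin 2) | ‖y - x‖ ≤ δ} ∩ {y | ‖y‖ = 1} = ∅ := by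
        rw [eq_empty_iff_forall_notMem]
        rintro y ⟨hy1, hy2⟩
        simp only [mem_setOf_eq] at hy1 hy2
        rw [hx, sub_zero, hy2] at hy1
        linarith
      rw [hempty, measure_empty]
      exact zero_le
    · obtain ⟨φ, hsub⟩ := subset_arc hδ0 hδ1 hx
      calc μH[1] ({y : EuclideanSpace ℝ (Fin 2) | ‖y - x‖ ≤ δ} ∩ {y | ‖y‖ = 1})
          ≤ μH[1] (circ '' Icc (φ - Real.arcsin δ) (φ + Real.arcsin δ)) := measure_mono hsub
        _ ≤ (1 : ℝ≥0) ^ (1:ℝ) * μH[1] (Icc (φ - Real.arcsin δ) (φ + Real.arcsin δ)) :=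
            circ_lipschitz.hausdorffMeasure_image_le (by norm_num) _
        _ = volume (Icc (φ - Real.arcsin δ) (φ + Real.arcsin δ)) := by
            rw [MeasureTheory.hausdorffMeasure_real]; simp
        _ = ENNReal.ofReal (2 * Real.arcsin δ) := by
            rw [Real.volume_Icc]; ring_nf
  calc (ENNReal.ofReal (2 * π))⁻¹ *
        μH[1] ({y : EuclideanSpace ℝ (Fin 2) | ‖y - x‖ ≤ δ} ∩ {y | ‖y‖ = 1})
      ≤ (ENNReal.ofReal (2 * π))⁻¹ * ENNReal.ofReal (2 * Real.arcsin δ) :=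
        mul_le_mul_right harc _
    _ = ENNReal.ofReal (2 * Real.arcsin δ) / ENNReal.ofReal (2 * π) := by
        rw [ENNReal.div_eq_inv_mul]
    _ = ENNReal.ofReal (2 * Real.arcsin δ / (2 * π)) := by
        rw [ENNReal.ofReal_div_of_pos (by positivity)]
    _ ≤ ENNReal.ofReal (Real.arcsin δhat / (π * δhat) * δ) := by
        apply ENNReal.ofReal_le_ofReal
        have key := arcsin_mul_le hδ0 hδδ hδhat1
        rw [div_le_iff₀ (by positivity)]
        have h2 : Real.arcsin δhat / (π * δhat) * δ * (2 * π)
            = 2 * (Real.arcsin δhat * δ) / δhat := by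
          field_simp
        rw [h2, le_div_iff₀ hδhat0]
        nlinarith [key]
end

section
/- Let C ⊆ ℝ be a nonempty compact set satisfying C = (1/3)·C ∪ ((1/3)·C + 2/3) (i.e., C is the middle third Cantor set), and let m := log 2 / log 3. Then for every x ∈ ℝ and every δ > 0, ℋ^m( { y ∈ C : |y − x| < δ } ) ≤ 3 · ℋ^m(C) · δ^m, where ℋ^m denotes the m-dimensional Hausdorff measure on ℝ. -/
open MeasureTheory Real Set
open scoped ENNReal NNReal

/-- Let `C ⊆ ℝ` be the middle third Cantor set, i.e. the nonempty compact
set with `C = (1/3)·C ∪ ((1/3)·C + 2/3)`, and let `m = log 2 / log 3`. Then for every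
`x ∈ ℝ` and `δ > 0`, `ℋ^m({y ∈ C : |y − x| < δ}) ≤ 3 ℋ^m(C) δ^m`. -/
theorem stmt16
    (C : Set ℝ) (hCne : C.Nonempty) (hCcompact : IsCompact C)
    (hC : C = (fun y => (1 / 3 : ℝ) * y) '' C ∪ (fun y => (1 / 3 : ℝ) * y + 2 / 3) '' C)
    (m : ℝ) (hm : m = Real.log 2 / Real.log 3) :
    ∀ (x : ℝ) (δ : ℝ), 0 < δ →
      μH[m] {y : ℝ | y ∈ C ∧ |y - x| < δ} ≤ 3 * μH[m] C * ENNReal.ofReal (δ ^ m) := by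
  have hlog2 : 0 < Real.log 2 := Real.log_pos one_lt_two
  have hlog3 : 0 < Real.log 3 := Real.log_pos (by norm_num)
  have hm0 : 0 < m := hm ▸ div_pos hlog2 hlog3
  have hm1 : m ≤ 1 := by
    rw [hm, div_le_one hlog3]
    exact Real.log_le_log (by norm_num) (by norm_num)
  have h3m : (3 : ℝ) ^ m = 2 := by
    rw [hm, Real.rpow_def_of_pos (by norm_num : (0:ℝ) < 3), mul_comm,
      div_mul_cancel₀ _ (ne_of_gt hlog3)]
    exact Real.exp_log (by norm_num)
  -- membership decomposition
  have hmem : ∀ y ∈ C, (∃ z ∈ C, y = 1/3 * z) ∨ (∃ z ∈ C, y = 1/3 * z + 2/3) := by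
    intro y hy
    rw [hC] at hy
    rcases hy with ⟨z, hz, rfl⟩ | ⟨z, hz, rfl⟩
    · exact Or.inl ⟨z, hz, rfl⟩
    · exact Or.inr ⟨z, hz, rfl⟩
  -- C ⊆ [0,1]
  have hub : ∀ y ∈ C, y ≤ 1 := by
    have hba : BddAbove C := hCcompact.bddAbove
    have hs : sSup C ≤ 1 := by
      have h1 : sSup C ≤ 1/3 * sSup C + 2/3 := by
        apply csSup_le hCne
        intro y hy
        rcases hmem y hy with ⟨z, hz, rfl⟩ | ⟨z, hz, rfl⟩
        · have := le_csSup hba hz; linarith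
        · have := le_csSup hba hz; linarith
      linarith
    intro y hy; exact le_trans (le_csSup hba hy) hs
  have hlb : ∀ y ∈ C, 0 ≤ y := by
    have hbb : BddBelow C := hCcompact.bddBelow
    have hs : 0 ≤ sInf C := by
      have h1 : 1/3 * sInf C ≤ sInf C := by
        apply le_csInf hCne
        intro y hy
        rcases hmem y hy with ⟨z, hz, rfl⟩ | ⟨z, hz, rfl⟩
        · have := csInf_le hbb hz; linarith
        · have := csInf_le hbb hz; linarith
      linarith
    intro y hy; exact le_trans hs (csInf_le hbb hy)
  -- Lipschitz-scaling bound: images under the branch maps halve the measure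
  have hhalf : ∀ (c : ℝ) (s : Set ℝ),
      μH[m] ((fun y => (1/3 : ℝ) * y + c) '' s) ≤ 2⁻¹ * μH[m] s := by
    intro c s
    have hlip : LipschitzWith (1/3 : ℝ≥0) (fun y : ℝ => (1/3 : ℝ) * y + c) := by
      apply LipschitzWith.of_dist_le_mul
      intro p q
      rw [Real.dist_eq, Real.dist_eq,
        show (1/3 * p + c) - (1/3 * q + c) = 1/3 * (p - q) by ring, abs_mul,
        abs_of_nonneg (by norm_num : (0:ℝ) ≤ 1/3)]
      exact le_of_eq (by push_cast; ring)
    have h1 := hlip.hausdorffMeasure_image_le hm0.le s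
    refine h1.trans (le_of_eq ?_)
    congr 1
    have hc : ((1/3 : ℝ≥0) : ℝ≥0∞) = (3 : ℝ≥0∞)⁻¹ := by
      rw [one_div, ENNReal.coe_inv (by norm_num)]
      norm_num
    rw [hc, ENNReal.inv_rpow,
      show (3 : ℝ≥0∞) = ENNReal.ofReal 3 by simp,
      ENNReal.ofReal_rpow_of_pos (by norm_num), h3m]
    simp
  -- `ofReal ((3b)^m) = 2 * ofReal (b^m)`
  have hofReal3 : ∀ b : ℝ, 0 ≤ b →
      ENNReal.ofReal ((3 * b) ^ m) = 2 * ENNReal.ofReal (b ^ m) := by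
    intro b hb
    rw [Real.mul_rpow (by norm_num) hb, h3m, ENNReal.ofReal_mul (by norm_num)]
    norm_num
  -- rpow lower bounds
  have hrpow_ge : ∀ c b : ℝ, 0 < c → c ≤ 1 → c ≤ b → c ≤ b ^ m := by
    intro c b hc hc1 hcb
    calc c = c ^ (1:ℝ) := (Real.rpow_one c).symm
      _ ≤ c ^ m := Real.rpow_le_rpow_of_exponent_ge hc hc1 hm1
      _ ≤ b ^ m := Real.rpow_le_rpow hc.le hcb hm0.le
  -- trivial bound for large radii
  have hbig : ∀ (x δ : ℝ), 1/3 ≤ δ →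
      μH[m] {y : ℝ | y ∈ C ∧ |y - x| < δ} ≤ 3 * μH[m] C * ENNReal.ofReal (δ ^ m) := by
    intro x δ hδ
    have h13 : (1/3 : ℝ) ≤ δ ^ m := hrpow_ge (1/3) δ (by norm_num) (by norm_num) hδ
    have h1 : (1 : ℝ≥0∞) ≤ 3 * ENNReal.ofReal (δ ^ m) := by
      calc (1 : ℝ≥0∞) = ENNReal.ofReal 3 * ENNReal.ofReal (1/3) := by
            rw [← ENNReal.ofReal_mul (by norm_num)]; norm_num
        _ ≤ ENNReal.ofReal 3 * ENNReal.ofReal (δ ^ m) :=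
            mul_le_mul_right (ENNReal.ofReal_le_ofReal h13) _
        _ = 3 * ENNReal.ofReal (δ ^ m) := by norm_num
    calc μH[m] {y : ℝ | y ∈ C ∧ |y - x| < δ} ≤ μH[m] C :=
          measure_mono (fun y hy => hy.1)
      _ = μH[m] C * 1 := (mul_one _).symm
      _ ≤ μH[m] C * (3 * ENNReal.ofReal (δ ^ m)) := mul_le_mul_right h1 _
      _ = 3 * μH[m] C * ENNReal.ofReal (δ ^ m) := by ring
  -- trivial bound for the edge lemma for radii ≥ 2/3
  have hedgebig : ∀ (x δ : ℝ), 2/3 ≤ δ →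
      μH[m] {y : ℝ | y ∈ C ∧ |y - x| < δ} ≤ 3/2 * μH[m] C * ENNReal.ofReal (δ ^ m) := by
    intro x δ hδ
    have h23 : (2/3 : ℝ) ≤ δ ^ m := hrpow_ge (2/3) δ (by norm_num) (by norm_num) hδ
    have h1 : (1 : ℝ≥0∞) ≤ 3/2 * ENNReal.ofReal (δ ^ m) := by
      calc (1 : ℝ≥0∞) = ENNReal.ofReal (3/2) * ENNReal.ofReal (2/3) := by
            rw [← ENNReal.ofReal_mul (by norm_num)]; norm_num
        _ ≤ ENNReal.ofReal (3/2) * ENNReal.ofReal (δ ^ m) :=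
            mul_le_mul_right (ENNReal.ofReal_le_ofReal h23) _
        _ = 3/2 * ENNReal.ofReal (δ ^ m) := by
            rw [ENNReal.ofReal_div_of_pos (by norm_num)]; norm_num
    calc μH[m] {y : ℝ | y ∈ C ∧ |y - x| < δ} ≤ μH[m] C :=
          measure_mono (fun y hy => hy.1)
      _ = μH[m] C * 1 := (mul_one _).symm
      _ ≤ μH[m] C * (3/2 * ENNReal.ofReal (δ ^ m)) := mul_le_mul_right h1 _
      _ = 3/2 * μH[m] C * ENNReal.ofReal (δ ^ m) := by ring
  have htwo : (2⁻¹ : ℝ≥0∞) * 2 = 1 :=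
    ENNReal.inv_mul_cancel (by norm_num) (by norm_num)
  -- edge lemma: balls centered at 0 and at 1
  have edgeAux : ∀ k : ℕ, ∀ a : ℝ, 0 < a → (1/3 : ℝ) ^ k ≤ a →
      μH[m] {y : ℝ | y ∈ C ∧ |y - 0| < a} ≤ 3/2 * μH[m] C * ENNReal.ofReal (a ^ m) ∧
      μH[m] {y : ℝ | y ∈ C ∧ |y - 1| < a} ≤ 3/2 * μH[m] C * ENNReal.ofReal (a ^ m) := by
    intro k
    induction k with
    | zero =>
      intro a ha hge
      simp only [pow_zero] at hge
      exact ⟨hedgebig 0 a (by linarith), hedgebig 1 a (by linarith)⟩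
    | succ k ih =>
      intro a ha hge
      by_cases h23 : (2/3 : ℝ) ≤ a
      · exact ⟨hedgebig 0 a h23, hedgebig 1 a h23⟩
      push_neg at h23
      have hge' : (1/3 : ℝ) ^ k ≤ 3 * a := by
        rw [pow_succ] at hge; linarith
      have ih' := ih (3 * a) (by linarith) hge'
      have hcomb : ∀ s : Set ℝ,
          μH[m] s ≤ 3/2 * μH[m] C * ENNReal.ofReal ((3*a) ^ m) →
          ∀ t : Set ℝ, μH[m] t ≤ 2⁻¹ * μH[m] s →
          μH[m] t ≤ 3/2 * μH[m] C * ENNReal.ofReal (a ^ m) := by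
        intro s hs t ht
        calc μH[m] t ≤ 2⁻¹ * μH[m] s := ht
          _ ≤ 2⁻¹ * (3/2 * μH[m] C * ENNReal.ofReal ((3*a) ^ m)) := mul_le_mul_right hs _
          _ = 2⁻¹ * (3/2 * μH[m] C * (2 * ENNReal.ofReal (a ^ m))) := by
              rw [hofReal3 a ha.le]
          _ = (2⁻¹ * 2) * (3/2 * μH[m] C * ENNReal.ofReal (a ^ m)) := by ring
          _ = 3/2 * μH[m] C * ENNReal.ofReal (a ^ m) := by rw [htwo, one_mul]
      constructor
      · refine hcomb _ ih'.1 _ ?_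
        refine le_trans (measure_mono ?_) (hhalf 0 _)
        rintro y ⟨hyC, hya⟩
        rcases hmem y hyC with ⟨z, hz, rfl⟩ | ⟨z, hz, rfl⟩
        · refine ⟨z, ⟨hz, ?_⟩, by ring⟩
          rw [abs_lt] at hya ⊢
          constructor <;> [linarith [hya.1]; linarith [hya.2]]
        · exfalso
          rw [abs_lt] at hya
          have := hlb z hz
          linarith [hya.2]
      · refine hcomb _ ih'.2 _ ?_
        refine le_trans (measure_mono ?_) (hhalf (2/3) _)
        rintro y ⟨hyC, hya⟩
        rcases hmem y hyC with ⟨z, hz, rfl⟩ | ⟨z, hz, rfl⟩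
        · exfalso
          rw [abs_lt] at hya
          have := hub z hz
          linarith [hya.1]
        · refine ⟨z, ⟨hz, ?_⟩, by ring⟩
          rw [abs_lt] at hya ⊢
          constructor <;> [linarith [hya.1]; linarith [hya.2]]
  have edge0 : ∀ a : ℝ, 0 < a →
      μH[m] {y : ℝ | y ∈ C ∧ |y - 0| < a} ≤ 3/2 * μH[m] C * ENNReal.ofReal (a ^ m) := by
    intro a ha
    obtain ⟨k, hk⟩ := exists_pow_lt_of_lt_one ha (by norm_num : (1/3 : ℝ) < 1)
    exact (edgeAux k a ha hk.le).1
  have edge1 : ∀ a : ℝ, 0 < a →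
      μH[m] {y : ℝ | y ∈ C ∧ |y - 1| < a} ≤ 3/2 * μH[m] C * ENNReal.ofReal (a ^ m) := by
    intro a ha
    obtain ⟨k, hk⟩ := exists_pow_lt_of_lt_one ha (by norm_num : (1/3 : ℝ) < 1)
    exact (edgeAux k a ha hk.le).2
  -- main induction
  have main : ∀ n : ℕ, ∀ x δ : ℝ, 0 < δ → (1/3 : ℝ) ^ n ≤ δ →
      μH[m] {y : ℝ | y ∈ C ∧ |y - x| < δ} ≤ 3 * μH[m] C * ENNReal.ofReal (δ ^ m) := by
    intro n
    induction n with
    | zero =>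
      intro x δ hδ hge
      simp only [pow_zero] at hge
      exact hbig x δ (by linarith)
    | succ n ih =>
      intro x δ hδ hge
      by_cases hδ3 : (1/3 : ℝ) ≤ δ
      · exact hbig x δ hδ3
      push_neg at hδ3
      have hge' : (1/3 : ℝ) ^ n ≤ 3 * δ := by
        rw [pow_succ] at hge; linarith
      by_cases hR : ∃ y, (y ∈ C ∧ |y - x| < δ) ∧ 2/3 ≤ y
      · by_cases hL : ∃ y, (y ∈ C ∧ |y - x| < δ) ∧ y ≤ 1/3
        · -- the ball meets both halves: both witnesses force the ball near the middle gap
          obtain ⟨y₂, hy₂, hy₂R⟩ := hR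
          obtain ⟨y₁, hy₁, hy₁L⟩ := hL
          have h2 := abs_lt.mp hy₂.2
          have h1 := abs_lt.mp hy₁.2
          have hapos : 0 < 6 * δ - 1 := by linarith
          have hsub : {y : ℝ | y ∈ C ∧ |y - x| < δ} ⊆
              ((fun y => (1/3 : ℝ) * y + 0) '' {y : ℝ | y ∈ C ∧ |y - 1| < 6 * δ - 1}) ∪
              ((fun y => (1/3 : ℝ) * y + 2/3) '' {y : ℝ | y ∈ C ∧ |y - 0| < 6 * δ - 1}) := by
            rintro y ⟨hyC, hyx⟩
            have hyx' := abs_lt.mp hyx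
            rcases hmem y hyC with ⟨z, hz, rfl⟩ | ⟨z, hz, rfl⟩
            · left
              refine ⟨z, ⟨hz, ?_⟩, by ring⟩
              rw [abs_lt]
              have hz1 := hub z hz
              constructor <;> linarith [hyx'.1, h2.1]
            · right
              refine ⟨z, ⟨hz, ?_⟩, by ring⟩
              rw [abs_lt]
              have hz0 := hlb z hz
              constructor <;> linarith [hyx'.2, h1.2]
          have hE1 := edge1 (6 * δ - 1) hapos
          have hE0 := edge0 (6 * δ - 1) hapos
          have haδ : ENNReal.ofReal ((6 * δ - 1) ^ m) ≤ 2 * ENNReal.ofReal (δ ^ m) := by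
            rw [← hofReal3 δ hδ.le]
            exact ENNReal.ofReal_le_ofReal
              (Real.rpow_le_rpow hapos.le (by linarith) hm0.le)
          calc μH[m] {y : ℝ | y ∈ C ∧ |y - x| < δ}
              ≤ μH[m] (((fun y => (1/3 : ℝ) * y + 0) '' {y : ℝ | y ∈ C ∧ |y - 1| < 6 * δ - 1}) ∪
                ((fun y => (1/3 : ℝ) * y + 2/3) '' {y : ℝ | y ∈ C ∧ |y - 0| < 6 * δ - 1})) :=
                measure_mono hsub
            _ ≤ μH[m] ((fun y => (1/3 : ℝ) * y + 0) '' {y : ℝ | y ∈ C ∧ |y - 1| < 6 * δ - 1}) +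
                μH[m] ((fun y => (1/3 : ℝ) * y + 2/3) '' {y : ℝ | y ∈ C ∧ |y - 0| < 6 * δ - 1}) :=
                measure_union_le _ _
            _ ≤ 2⁻¹ * μH[m] {y : ℝ | y ∈ C ∧ |y - 1| < 6 * δ - 1} +
                2⁻¹ * μH[m] {y : ℝ | y ∈ C ∧ |y - 0| < 6 * δ - 1} :=
                add_le_add (hhalf 0 _) (hhalf (2/3) _)
            _ ≤ 2⁻¹ * (3/2 * μH[m] C * ENNReal.ofReal ((6 * δ - 1) ^ m)) +
                2⁻¹ * (3/2 * μH[m] C * ENNReal.ofReal ((6 * δ - 1) ^ m)) :=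
                add_le_add (mul_le_mul_right hE1 _) (mul_le_mul_right hE0 _)
            _ = (2⁻¹ * 2) * (3/2 * μH[m] C * ENNReal.ofReal ((6 * δ - 1) ^ m)) := by ring
            _ = 3/2 * μH[m] C * ENNReal.ofReal ((6 * δ - 1) ^ m) := by rw [htwo, one_mul]
            _ ≤ 3/2 * μH[m] C * (2 * ENNReal.ofReal (δ ^ m)) := mul_le_mul_right haδ _
            _ = (3/2 * 2) * μH[m] C * ENNReal.ofReal (δ ^ m) := by ring
            _ = 3 * μH[m] C * ENNReal.ofReal (δ ^ m) := by
                rw [ENNReal.div_mul_cancel (by norm_num) (by norm_num)]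
        · -- no point ≤ 1/3 : everything is in the right half
          push_neg at hL
          have hsub : {y : ℝ | y ∈ C ∧ |y - x| < δ} ⊆
              (fun y => (1/3 : ℝ) * y + 2/3) '' {y : ℝ | y ∈ C ∧ |y - (3 * x - 2)| < 3 * δ} := by
            rintro y ⟨hyC, hyx⟩
            rcases hmem y hyC with ⟨z, hz, rfl⟩ | ⟨z, hz, rfl⟩
            · exfalso
              have hz1 := hub z hz
              have := hL (1/3 * z) ⟨hyC, hyx⟩
              linarith
            · refine ⟨z, ⟨hz, ?_⟩, by ring⟩
              rw [abs_lt] at hyx ⊢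
              constructor <;> [linarith [hyx.1]; linarith [hyx.2]]
          calc μH[m] {y : ℝ | y ∈ C ∧ |y - x| < δ}
              ≤ μH[m] ((fun y => (1/3 : ℝ) * y + 2/3) ''
                {y : ℝ | y ∈ C ∧ |y - (3 * x - 2)| < 3 * δ}) := measure_mono hsub
            _ ≤ 2⁻¹ * μH[m] {y : ℝ | y ∈ C ∧ |y - (3 * x - 2)| < 3 * δ} := hhalf _ _
            _ ≤ 2⁻¹ * (3 * μH[m] C * ENNReal.ofReal ((3 * δ) ^ m)) :=
                mul_le_mul_right (ih (3 * x - 2) (3 * δ) (by linarith) hge') _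
            _ = 2⁻¹ * (3 * μH[m] C * (2 * ENNReal.ofReal (δ ^ m))) := by
                rw [hofReal3 δ hδ.le]
            _ = (2⁻¹ * 2) * (3 * μH[m] C * ENNReal.ofReal (δ ^ m)) := by ring
            _ = 3 * μH[m] C * ENNReal.ofReal (δ ^ m) := by rw [htwo, one_mul]
      · -- no point ≥ 2/3 : everything is in the left half
        push_neg at hR
        have hsub : {y : ℝ | y ∈ C ∧ |y - x| < δ} ⊆
            (fun y => (1/3 : ℝ) * y + 0) '' {y : ℝ | y ∈ C ∧ |y - 3 * x| < 3 * δ} := by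
          rintro y ⟨hyC, hyx⟩
          rcases hmem y hyC with ⟨z, hz, rfl⟩ | ⟨z, hz, rfl⟩
          · refine ⟨z, ⟨hz, ?_⟩, by ring⟩
            rw [abs_lt] at hyx ⊢
            constructor <;> [linarith [hyx.1]; linarith [hyx.2]]
          · exfalso
            have hz0 := hlb z hz
            have := hR (1/3 * z + 2/3) ⟨hyC, hyx⟩
            linarith
        calc μH[m] {y : ℝ | y ∈ C ∧ |y - x| < δ}
            ≤ μH[m] ((fun y => (1/3 : ℝ) * y + 0) ''
              {y : ℝ | y ∈ C ∧ |y - 3 * x| < 3 * δ}) := measure_mono hsub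
          _ ≤ 2⁻¹ * μH[m] {y : ℝ | y ∈ C ∧ |y - 3 * x| < 3 * δ} := hhalf _ _
          _ ≤ 2⁻¹ * (3 * μH[m] C * ENNReal.ofReal ((3 * δ) ^ m)) :=
              mul_le_mul_right (ih (3 * x) (3 * δ) (by linarith) hge') _
          _ = 2⁻¹ * (3 * μH[m] C * (2 * ENNReal.ofReal (δ ^ m))) := by
              rw [hofReal3 δ hδ.le]
          _ = (2⁻¹ * 2) * (3 * μH[m] C * ENNReal.ofReal (δ ^ m)) := by ring
          _ = 3 * μH[m] C * ENNReal.ofReal (δ ^ m) := by rw [htwo, one_mul]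
  intro x δ hδ
  obtain ⟨n, hn⟩ := exists_pow_lt_of_lt_one hδ (by norm_num : (1/3 : ℝ) < 1)
  exact main n x δ hδ hn.le
end

section
/- Let C ⊆ ℝ be the middle third Cantor set, i.e., the unique nonempty compact set with C = (1/3)·C ∪ ((1/3)·C + 2/3), let m := log 2 / log 3, assume 0 < ℋ^m(C) < ∞, and let X be a random variable with distribution μ_X := ℋ^m|_C / ℋ^m(C). Consider the distortion function ρ(x,y) := |x − y|² on ℝ × ℝ, and define the rate-distortion function R(D) := inf { I(π) : π a probability measure on ℝ × ℝ with first marginal μ_X and ∫ ρ dπ ≤ D }, where I(π) is the Kullback–Leibler divergence of π with respect to the product of its marginals (and ∞ if not absolutely continuous). Then with σ := log 2 / log 9, for every D > 0, R(D) ≥ σ · log(σ/D) − σ − log( 3 · Γ(σ + 1) ). -/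
open MeasureTheory Real Set
open scoped ENNReal NNReal Classical

lemma cantor_subset_Icc (C : Set ℝ) (hCne : C.Nonempty) (hCcompact : IsCompact C)
    (hC : C = (fun y => (1 / 3 : ℝ) * y) '' C ∪ (fun y => (1 / 3 : ℝ) * y + 2 / 3) '' C) :
    C ⊆ Icc 0 1 := by
  have hbdd : BddAbove C := hCcompact.bddAbove
  have hbdd' : BddBelow C := hCcompact.bddBelow
  have hMmem : sSup C ∈ C := hCcompact.sSup_mem hCne
  have hmmem : sInf C ∈ C := hCcompact.sInf_mem hCne
  have hM : sSup C ≤ 1 := by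
    have h1 : sSup C ∈ (fun y => (1 / 3 : ℝ) * y) '' C ∪ (fun y => (1 / 3 : ℝ) * y + 2 / 3) '' C := by
      rw [← hC]; exact hMmem
    rcases h1 with ⟨y, hy, hxy⟩ | ⟨y, hy, hxy⟩
    · have hyM : y ≤ sSup C := le_csSup hbdd hy
      simp only at hxy; nlinarith
    · have hyM : y ≤ sSup C := le_csSup hbdd hy
      simp only at hxy; nlinarith
  have hm : 0 ≤ sInf C := by
    have h1 : sInf C ∈ (fun y => (1 / 3 : ℝ) * y) '' C ∪ (fun y => (1 / 3 : ℝ) * y + 2 / 3) '' C := by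
      rw [← hC]; exact hmmem
    rcases h1 with ⟨y, hy, hxy⟩ | ⟨y, hy, hxy⟩
    · have hyM : sInf C ≤ y := csInf_le hbdd' hy
      simp only at hxy; nlinarith
    · have hyM : sInf C ≤ y := csInf_le hbdd' hy
      simp only at hxy; nlinarith
  intro x hx
  exact ⟨le_trans hm (csInf_le hbdd' hx), le_trans (le_csSup hbdd hx) hM⟩

noncomputable def cantorA : ℕ → Finset ℝ
  | 0 => {0}
  | k+1 => (cantorA k).image (fun a => a/3) ∪ (cantorA k).image (fun a => a/3 + 2/3)

lemma cantorA_mem_iff {k : ℕ} {x : ℝ} : x ∈ cantorA (k+1) ↔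
    (∃ a ∈ cantorA k, a/3 = x) ∨ (∃ a ∈ cantorA k, a/3 + 2/3 = x) := by
  simp [cantorA, Finset.mem_union, Finset.mem_image]

lemma cantorA_bounds : ∀ k, ∀ a ∈ cantorA k, 0 ≤ a ∧ a + (1/3:ℝ)^k ≤ 1 := by
  intro k
  induction k with
  | zero => intro a ha; simp [cantorA] at ha; simp [ha]
  | succ k ih =>
    intro a' ha'
    rcases cantorA_mem_iff.mp ha' with ⟨a, ha, rfl⟩ | ⟨a, ha, rfl⟩ <;>
      obtain ⟨h1, h2⟩ := ih a ha <;>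
      constructor <;> [skip; skip; skip; skip] <;>
      · simp -failIfUnchanged only [pow_succ] at *
        nlinarith [pow_pos (by norm_num : (0:ℝ) < 1/3) k]

lemma cantorA_sep : ∀ k, ∀ a ∈ cantorA k, ∀ b ∈ cantorA k, a ≠ b →
    2 * (1/3:ℝ)^k ≤ |a - b| := by
  intro k
  induction k with
  | zero => intro a ha b hb hab; simp [cantorA] at ha hb; exact absurd (ha.trans hb.symm) hab
  | succ k ih =>
    intro a' ha' b' hb' hab
    have hp : (0:ℝ) < (1/3:ℝ)^k := pow_pos (by norm_num) k
    have hcross : ∀ a ∈ cantorA k, ∀ b ∈ cantorA k, 2 * (1/3:ℝ)^(k+1) ≤ |a/3 - (b/3 + 2/3)| := by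
      intro a ha b hb
      obtain ⟨ha1, ha2⟩ := cantorA_bounds k a ha
      obtain ⟨hb1, hb2⟩ := cantorA_bounds k b hb
      rw [abs_sub_comm]
      refine le_trans ?_ (le_abs_self _)
      simp only [pow_succ] at *
      nlinarith
    rcases cantorA_mem_iff.mp ha' with ⟨a, ha, rfl⟩ | ⟨a, ha, rfl⟩ <;>
      rcases cantorA_mem_iff.mp hb' with ⟨b, hb, rfl⟩ | ⟨b, hb, rfl⟩
    · have hab' : a ≠ b := fun h => hab (by rw [h])
      have := ih a ha b hb hab'
      have : 2 * (1/3:ℝ)^k / 3 ≤ |a - b| / 3 := by linarith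
      calc 2 * (1/3:ℝ)^(k+1) = 2 * (1/3:ℝ)^k / 3 := by ring
        _ ≤ |a - b| / 3 := this
        _ = |a/3 - b/3| := by rw [show a/3 - b/3 = (a-b)/3 by ring, abs_div]; norm_num
    · exact hcross a ha b hb
    · rw [abs_sub_comm]; exact hcross b hb a ha
    · have hab' : a ≠ b := fun h => hab (by rw [h])
      have := ih a ha b hb hab'
      have h2 : 2 * (1/3:ℝ)^k / 3 ≤ |a - b| / 3 := by linarith
      calc 2 * (1/3:ℝ)^(k+1) = 2 * (1/3:ℝ)^k / 3 := by ring
        _ ≤ |a - b| / 3 := h2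
        _ = |(a/3 + 2/3) - (b/3 + 2/3)| := by
            rw [show a/3 + 2/3 - (b/3 + 2/3) = (a-b)/3 by ring, abs_div]; norm_num

lemma cantorA_cover (C : Set ℝ)
    (hC : C = (fun y => (1 / 3 : ℝ) * y) '' C ∪ (fun y => (1 / 3 : ℝ) * y + 2 / 3) '' C) :
    ∀ k, C ⊆ ⋃ a ∈ cantorA k, (fun x => (1/3:ℝ)^k * x + a) '' C := by
  intro k
  induction k with
  | zero =>
    intro x hx
    simp only [cantorA, pow_zero, one_mul, Finset.mem_singleton, mem_iUnion]
    exact ⟨0, by simp, x, hx, by simp⟩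
  | succ k ih =>
    intro x hx
    have hx' : x ∈ (fun y => (1 / 3 : ℝ) * y) '' C ∪ (fun y => (1 / 3 : ℝ) * y + 2 / 3) '' C := by
      rw [← hC]; exact hx
    rw [Set.mem_union] at hx'
    simp only [Set.mem_image] at hx'
    simp only [mem_iUnion, Finset.mem_coe]
    rcases hx' with ⟨y, hy, rfl⟩ | ⟨y, hy, rfl⟩
    · obtain ⟨a, ha, z, hz, hza⟩ := by
        have h := ih hy
        simpa only [mem_iUnion, Finset.mem_coe, Set.mem_image] using h
      refine ⟨a/3, cantorA_mem_iff.mpr (Or.inl ⟨a, ha, rfl⟩), z, hz, ?_⟩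
      simp only at hza ⊢
      rw [← hza]; ring
    · obtain ⟨a, ha, z, hz, hza⟩ := by
        have h := ih hy
        simpa only [mem_iUnion, Finset.mem_coe, Set.mem_image] using h
      refine ⟨a/3 + 2/3, cantorA_mem_iff.mpr (Or.inr ⟨a, ha, rfl⟩), z, hz, ?_⟩
      simp only at hza ⊢
      rw [← hza]; ring

lemma finset_card_of_sep (S : Finset ℝ) (g L R : ℝ) (hg : 0 < g) (hLR : L ≤ R)
    (hsep : ∀ a ∈ S, ∀ b ∈ S, a ≠ b → g ≤ |a - b|)
    (hmem : ∀ a ∈ S, L ≤ a ∧ a ≤ R) :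
    (S.card : ℝ) * g ≤ R - L + g := by
  have hdisj : (↑S : Set ℝ).PairwiseDisjoint (fun a => Ico a (a + g)) := by
    intro a ha b hb hab
    have h := hsep a ha b hb hab
    rw [Function.onFun, Set.Ico_disjoint_Ico]
    rcases le_or_gt a b with hab' | hab'
    · have : a + g ≤ b := by
        have he : |a - b| = b - a := by rw [abs_sub_comm]; exact abs_of_nonneg (by linarith)
        rw [he] at h
        rcases lt_or_eq_of_le hab' with h' | h'
        · linarith
        · exact absurd h' hab
      calc min (a+g) (b+g) ≤ a + g := min_le_left _ _
        _ ≤ b := this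
        _ ≤ max a b := le_max_right _ _
    · have : b + g ≤ a := by
        have : |a - b| = a - b := abs_of_nonneg (by linarith)
        rw [this] at h; linarith
      calc min (a+g) (b+g) ≤ b + g := min_le_right _ _
        _ ≤ a := this
        _ ≤ max a b := le_max_left _ _
  have hmeas := measure_biUnion_finset (μ := volume) hdisj (fun a _ => measurableSet_Ico (a := a) (b := a + g))
  have hsub : (⋃ a ∈ S, Ico a (a + g)) ⊆ Ico L (R + g) := by
    intro y hy
    simp only [mem_iUnion] at hy
    obtain ⟨a, ha, hy1, hy2⟩ := hy
    obtain ⟨h1, h2⟩ := hmem a ha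
    exact ⟨le_trans h1 hy1, lt_of_lt_of_le hy2 (by linarith)⟩
  have hle : (volume (⋃ a ∈ S, Ico a (a + g))) ≤ ENNReal.ofReal (R + g - L) := by
    refine le_trans (measure_mono hsub) ?_
    rw [Real.volume_Ico]
  rw [hmeas] at hle
  simp only [Real.volume_Ico, add_sub_cancel_left] at hle
  rw [Finset.sum_const, nsmul_eq_mul] at hle
  have : ENNReal.ofReal ((S.card : ℝ) * g) ≤ ENNReal.ofReal (R + g - L) := by
    rw [ENNReal.ofReal_mul (by positivity)]
    simpa using hle
  have := (ENNReal.ofReal_le_ofReal_iff (by linarith)).mp this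
  linarith

lemma rpow_chord {m : ℝ} (hm0 : 0 ≤ m) (hm1 : m ≤ 1) (h3m : (3:ℝ) ^ m = 2) :
    ∀ t : ℝ, 1 ≤ t → t ≤ 3 → (t + 1) / 2 ≤ t ^ m := by
  intro t ht1 ht3
  have hc := Real.concaveOn_rpow hm0 hm1
  have key := hc.2 (show (1:ℝ) ∈ Ici 0 by norm_num) (show (3:ℝ) ∈ Ici 0 by norm_num)
    (show (0:ℝ) ≤ (3 - t)/2 by linarith) (show (0:ℝ) ≤ (t - 1)/2 by linarith)
    (show (3 - t)/2 + (t - 1)/2 = 1 by ring)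
  simp only [smul_eq_mul, Real.one_rpow, h3m] at key
  have heq : (3 - t)/2 * 1 + (t - 1)/2 * 3 = t := by ring
  rw [heq] at key
  linarith

lemma cantor_numeric {m u δ : ℝ} (n : ℕ) (hm0 : 0 ≤ m) (hm1 : m ≤ 1)
    (h3m : (3:ℝ) ^ m = 2) (hu : 0 < u) (huδ : u ≤ δ) (hδu : δ < 3 * u)
    (hcard : (n : ℝ) * (2 * u) ≤ 2 * δ + 3 * u) :
    (n : ℝ) * u ^ m ≤ 3 * δ ^ m := by
  set t := δ / u with hts
  have ht1 : 1 ≤ t := (one_le_div hu).mpr huδ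
  have ht3 : t ≤ 3 := by rw [hts, div_le_iff₀ hu]; linarith
  have hchord := rpow_chord hm0 hm1 h3m t ht1 ht3
  have hδ : δ = t * u := by rw [hts, div_mul_cancel₀ δ hu.ne']
  have hδm : δ ^ m = t ^ m * u ^ m := by
    rw [hδ, Real.mul_rpow (by linarith) hu.le]
  have hum : (0:ℝ) < u ^ m := Real.rpow_pos_of_pos hu m
  have hn : (n : ℝ) ≤ t + 3/2 := by
    have : (n:ℝ) * (2*u) ≤ (t + 3/2) * (2*u) := by
      rw [hδ] at hcard; nlinarith
    exact le_of_mul_le_mul_right this (by linarith)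
  calc (n : ℝ) * u ^ m ≤ (t + 3/2) * u ^ m := by nlinarith
    _ ≤ 3 * (t ^ m * u ^ m) := by nlinarith
    _ = 3 * δ ^ m := by rw [hδm]

lemma affine_lip (c a : ℝ) (hc : 0 ≤ c) :
    LipschitzWith (⟨c, hc⟩ : ℝ≥0) (fun x : ℝ => c * x + a) := by
  refine LipschitzWith.of_dist_le_mul fun x y => ?_
  simp only [Real.dist_eq, NNReal.coe_mk]
  rw [show c * x + a - (c * y + a) = c * (x - y) by ring, abs_mul, abs_of_nonneg hc]
  exact le_rfl

lemma piece_measure_le {m : ℝ} (hm0 : 0 ≤ m) (C : Set ℝ) (u a : ℝ) (hu : 0 < u) :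
    μH[m] ((fun x : ℝ => u * x + a) '' C) ≤ ENNReal.ofReal (u ^ m) * μH[m] C := by
  have h := (affine_lip u a hu.le).hausdorffMeasure_image_le hm0 C
  refine le_trans h (le_of_eq ?_)
  congr 1
  rw [← ENNReal.ofReal_rpow_of_pos hu, ENNReal.ofReal_eq_coe_nnreal hu.le]
  rfl

lemma cantor_ball_bound (C : Set ℝ) (hCne : C.Nonempty) (hCcompact : IsCompact C)
    (hC : C = (fun y => (1 / 3 : ℝ) * y) '' C ∪ (fun y => (1 / 3 : ℝ) * y + 2 / 3) '' C)
    {m : ℝ} (hm0 : 0 ≤ m) (hm1 : m ≤ 1) (h3m : (3:ℝ) ^ m = 2)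
    (x δ : ℝ) (hδ : 0 < δ) :
    μH[m] (C ∩ {y | |y - x| < δ}) ≤ ENNReal.ofReal (3 * δ ^ m) * μH[m] C := by
  rcases le_or_gt 1 δ with h1 | h1
  · have h3 : (1:ℝ) ≤ 3 * δ ^ m := by
      have := Real.one_le_rpow h1 hm0
      linarith
    calc μH[m] (C ∩ {y | |y - x| < δ}) ≤ μH[m] C := measure_mono inter_subset_left
      _ = 1 * μH[m] C := (one_mul _).symm
      _ ≤ ENNReal.ofReal (3 * δ ^ m) * μH[m] C := by
          exact mul_le_mul_left (ENNReal.one_le_ofReal.mpr h3) _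
  · -- find minimal k with (1/3)^k ≤ δ
    have hex : ∃ k : ℕ, (1/3:ℝ)^k ≤ δ := by
      obtain ⟨n, hn⟩ := exists_pow_lt_of_lt_one hδ (by norm_num : (1/3:ℝ) < 1)
      exact ⟨n, hn.le⟩
    set k := Nat.find hex with hkdef
    have hk : (1/3:ℝ)^k ≤ δ := Nat.find_spec hex
    have hk0 : k ≠ 0 := by
      intro h
      rw [h] at hk; simp at hk; linarith
    have hkm : ¬ ((1/3:ℝ)^(k-1) ≤ δ) := Nat.find_min hex (Nat.sub_lt (Nat.pos_of_ne_zero hk0) one_pos)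
    push_neg at hkm
    set u := (1/3:ℝ)^k with hudef
    have hu : 0 < u := pow_pos (by norm_num) k
    have hk3 : δ < 3 * u := by
      have hks : k - 1 + 1 = k := Nat.sub_add_cancel (Nat.pos_of_ne_zero hk0)
      have h2 : u = (1/3:ℝ)^(k-1) * (1/3) := by rw [hudef, ← pow_succ, hks]
      linarith
    set S := (cantorA k).filter (fun a => x - δ - u < a ∧ a < x + δ) with hSdef
    have hIcc := cantor_subset_Icc C hCne hCcompact hC
    -- inclusion
    have hsub : C ∩ {y | |y - x| < δ} ⊆ ⋃ a ∈ S, (fun z => u * z + a) '' C := by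
      rintro y ⟨hyC, hyb⟩
      have := cantorA_cover C hC k hyC
      simp only [mem_iUnion, Finset.mem_coe] at this
      obtain ⟨a, ha, z, hz, hza⟩ := this
      simp only at hza
      obtain ⟨hz0, hz1⟩ := hIcc hz
      simp only [Set.mem_setOf_eq, abs_lt] at hyb
      have hy1 : a ≤ y := by rw [← hza]; nlinarith
      have hy2 : y ≤ a + u := by rw [← hza]; nlinarith
      have haS : a ∈ S := by
        rw [hSdef, Finset.mem_filter]
        exact ⟨ha, by constructor <;> nlinarith⟩
      simp only [mem_iUnion, Finset.mem_coe]
      exact ⟨a, haS, z, hz, hza⟩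
    -- measure bound
    have hmeas : μH[m] (C ∩ {y | |y - x| < δ}) ≤ (S.card : ℝ≥0∞) * (ENNReal.ofReal (u ^ m) * μH[m] C) := by
      refine le_trans (measure_mono hsub) ?_
      refine le_trans (measure_biUnion_finset_le S _) ?_
      calc ∑ a ∈ S, μH[m] ((fun z => u * z + a) '' C)
          ≤ ∑ _a ∈ S, ENNReal.ofReal (u ^ m) * μH[m] C :=
            Finset.sum_le_sum (fun a _ => piece_measure_le hm0 C u a hu)
        _ = (S.card : ℝ≥0∞) * (ENNReal.ofReal (u ^ m) * μH[m] C) := by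
            rw [Finset.sum_const, nsmul_eq_mul]
    -- counting
    have hcount : (S.card : ℝ) * (2*u) ≤ 2*δ + 3*u := by
      have := finset_card_of_sep S (2*u) (x - δ - u) (x + δ) (by linarith) (by linarith)
        (fun a ha b hb hab => by
          have := cantorA_sep k a (Finset.mem_of_mem_filter a ha) b (Finset.mem_of_mem_filter b hb) hab
          calc 2*u = 2*(1/3:ℝ)^k := by rw [hudef]
            _ ≤ |a - b| := this)
        (fun a ha => by
          rw [hSdef, Finset.mem_filter] at ha
          exact ⟨ha.2.1.le, ha.2.2.le⟩)
      linarith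
    have hnum : (S.card : ℝ) * u ^ m ≤ 3 * δ ^ m :=
      cantor_numeric S.card hm0 hm1 h3m hu hk hk3 hcount
    calc μH[m] (C ∩ {y | |y - x| < δ}) ≤ (S.card : ℝ≥0∞) * (ENNReal.ofReal (u ^ m) * μH[m] C) := hmeas
      _ = ENNReal.ofReal ((S.card : ℝ) * u ^ m) * μH[m] C := by
          rw [← mul_assoc, ENNReal.ofReal_mul (Nat.cast_nonneg S.card), ENNReal.ofReal_natCast]
      _ ≤ ENNReal.ofReal (3 * δ ^ m) * μH[m] C :=
          mul_le_mul_left (ENNReal.ofReal_le_ofReal hnum) _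

lemma exp_layer (a : ℝ) (ha : 0 ≤ a) :
    ∫⁻ u in Ioi (0:ℝ), (if a < u then ENNReal.ofReal (Real.exp (-u)) else 0)
      = ENNReal.ofReal (Real.exp (-a)) := by
  have h1 : ∀ u : ℝ, (if a < u then ENNReal.ofReal (Real.exp (-u)) else 0)
      = (Ioi a).indicator (fun u => ENNReal.ofReal (Real.exp (-u))) u := by
    intro u; simp [Set.indicator_apply, Set.mem_Ioi]
  simp_rw [h1]
  rw [lintegral_indicator measurableSet_Ioi, Measure.restrict_restrict measurableSet_Ioi]
  have h2 : Ioi a ∩ Ioi 0 = Ioi a := inter_eq_left.mpr (fun z hz => lt_of_le_of_lt ha hz)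
  rw [h2]
  have hint : IntegrableOn (fun u : ℝ => Real.exp (-u)) (Ioi a) := by
    have := exp_neg_integrableOn_Ioi a (by norm_num : (0:ℝ) < 1)
    simpa using this
  rw [← ofReal_integral_eq_lintegral_ofReal hint
    (ae_of_all _ (fun u => (Real.exp_pos _).le)), integral_exp_neg_Ioi]

lemma gamma_layer {s σ : ℝ} (hs : 0 < s) (hσ : 0 < σ) :
    ∫⁻ u in Ioi (0:ℝ), (ENNReal.ofReal (Real.exp (-u)) * ENNReal.ofReal (3 * (u/s) ^ σ))
      = ENNReal.ofReal (3 * Real.Gamma (σ+1) * s ^ (-σ)) := by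
  have hconst : ENNReal.ofReal (3 * s ^ (-σ)) ≠ ⊤ := ENNReal.ofReal_ne_top
  have hcong : ∀ u ∈ Ioi (0:ℝ),
      ENNReal.ofReal (Real.exp (-u)) * ENNReal.ofReal (3 * (u/s) ^ σ)
        = ENNReal.ofReal (3 * s ^ (-σ)) * ENNReal.ofReal (Real.exp (-u) * u ^ σ) := by
    intro u hu
    rw [← ENNReal.ofReal_mul (Real.exp_pos _).le, ← ENNReal.ofReal_mul (by positivity)]
    congr 1
    rw [Real.div_rpow (le_of_lt hu) hs.le, Real.rpow_neg hs.le]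
    ring
  rw [setLIntegral_congr_fun measurableSet_Ioi hcong,
    lintegral_const_mul' _ _ hconst]
  have hGint : IntegrableOn (fun u : ℝ => Real.exp (-u) * u ^ (σ+1-1)) (Ioi 0) :=
    Real.GammaIntegral_convergent (by linarith)
  rw [show σ + 1 - 1 = σ by ring] at hGint
  have hnn : 0 ≤ᵐ[volume.restrict (Ioi (0:ℝ))] fun u : ℝ => Real.exp (-u) * u ^ σ := by
    filter_upwards [ae_restrict_mem measurableSet_Ioi] with u hu
    have : (0:ℝ) < u := hu
    positivity
  rw [← ofReal_integral_eq_lintegral_ofReal hGint hnn]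
  rw [← ENNReal.ofReal_mul (by positivity)]
  congr 1
  rw [Real.Gamma_eq_integral (by linarith : (0:ℝ) < σ + 1), show σ + 1 - 1 = σ by ring]
  ring
lemma exp_moment_bound {μ : Measure ℝ} [IsProbabilityMeasure μ] {m σ : ℝ}
    (hσ : 0 < σ) (hmσ : m = 2 * σ)
    (hball : ∀ x δ : ℝ, 0 < δ → μ {z | |z - x| < δ} ≤ ENNReal.ofReal (3 * δ ^ m))
    (y s : ℝ) (hs : 0 < s) :
    ∫⁻ x, ENNReal.ofReal (Real.exp (-(s * (x - y)^2))) ∂μ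
      ≤ ENNReal.ofReal (3 * Real.Gamma (σ+1) * s ^ (-σ)) := by
  set f : ℝ → ℝ → ℝ≥0∞ :=
    fun x u => if s * (x - y)^2 < u then ENNReal.ofReal (Real.exp (-u)) else 0 with hf
  have hmeas : AEMeasurable (Function.uncurry f) (μ.prod (volume.restrict (Ioi 0))) := by
    refine Measurable.aemeasurable ?_
    have hset : MeasurableSet {p : ℝ × ℝ | s * (p.1 - y)^2 < p.2} :=
      measurableSet_lt (by fun_prop) measurable_snd
    exact Measurable.ite hset (by fun_prop) measurable_const
  have hstep1 : ∀ x : ℝ, ∫⁻ u in Ioi (0:ℝ), f x u = ENNReal.ofReal (Real.exp (-(s * (x - y)^2))) :=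
    fun x => exp_layer _ (by positivity)
  have hswap : ∫⁻ x, ENNReal.ofReal (Real.exp (-(s * (x - y)^2))) ∂μ
      = ∫⁻ u in Ioi (0:ℝ), ∫⁻ x, f x u ∂μ := by
    rw [← lintegral_lintegral_swap hmeas]
    exact lintegral_congr fun x => (hstep1 x).symm
  rw [hswap]
  have hbd : ∀ u ∈ Ioi (0:ℝ), ∫⁻ x, f x u ∂μ
      ≤ ENNReal.ofReal (Real.exp (-u)) * ENNReal.ofReal (3 * (u/s) ^ σ) := by
    intro u hu
    have hu' : (0:ℝ) < u := hu
    have hsetx : MeasurableSet {x : ℝ | s * (x - y)^2 < u} :=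
      measurableSet_lt (by fun_prop) measurable_const
    have hind : ∀ x : ℝ, f x u = ({x : ℝ | s * (x - y)^2 < u}).indicator
        (fun _ => ENNReal.ofReal (Real.exp (-u))) x := by
      intro x; simp [hf, Set.indicator_apply]
    have heval : ∫⁻ x, f x u ∂μ
        = ENNReal.ofReal (Real.exp (-u)) * μ {x : ℝ | s * (x - y)^2 < u} := by
      simp_rw [hind]; exact lintegral_indicator_const hsetx _
    rw [heval]
    have hδ : 0 < Real.sqrt (u/s) := Real.sqrt_pos.mpr (by positivity)
    have hseteq : {x : ℝ | s * (x - y)^2 < u} = {z : ℝ | |z - y| < Real.sqrt (u/s)} := by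
      ext x
      simp only [Set.mem_setOf_eq]
      rw [Real.lt_sqrt (abs_nonneg _), sq_abs, lt_div_iff₀ hs]
      constructor <;> intro h <;> nlinarith
    have hballbd : μ {x : ℝ | s * (x - y)^2 < u} ≤ ENNReal.ofReal (3 * (u/s) ^ σ) := by
      rw [hseteq]
      refine le_trans (hball y _ hδ) (le_of_eq ?_)
      congr 2
      rw [Real.sqrt_eq_rpow, ← Real.rpow_mul (by positivity)]
      congr 1
      rw [hmσ]; ring
    exact mul_le_mul_right hballbd _
  calc ∫⁻ u in Ioi (0:ℝ), ∫⁻ x, f x u ∂μ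
      ≤ ∫⁻ u in Ioi (0:ℝ), ENNReal.ofReal (Real.exp (-u)) * ENNReal.ofReal (3 * (u/s) ^ σ) := by
        refine lintegral_mono_ae ?_
        filter_upwards [ae_restrict_mem measurableSet_Ioi] with u hu
        exact hbd u hu
    _ = ENNReal.ofReal (3 * Real.Gamma (σ+1) * s ^ (-σ)) := gamma_layer hs hσ

lemma integral_llr_nonneg'_s17 {α : Type*} [MeasurableSpace α] {μ ξ : Measure α}
    [IsProbabilityMeasure μ] [IsProbabilityMeasure ξ] (hμξ : μ ≪ ξ)
    (hint : Integrable (llr μ ξ) μ) : 0 ≤ ∫ x, llr μ ξ x ∂μ := by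
  have hneg : ∫ x, llr ξ μ x ∂μ = ∫ x, - llr μ ξ x ∂μ :=
    integral_congr_ae (neg_llr hμξ).symm
  have hint' : Integrable (llr ξ μ) μ := by
    refine (integrable_congr (neg_llr hμξ)).mp hint.neg
  have hpt : ∀ᵐ x ∂μ, llr ξ μ x ≤ (ξ.rnDeriv μ x).toReal - 1 := by
    filter_upwards [Measure.rnDeriv_pos' hμξ, Measure.rnDeriv_lt_top ξ μ] with x h1 h2
    exact Real.log_le_sub_one_of_pos (ENNReal.toReal_pos h1.ne' h2.ne)
  have hb : ∫ x, llr ξ μ x ∂μ ≤ ∫ x, ((ξ.rnDeriv μ x).toReal - 1) ∂μ :=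
    integral_mono_ae hint' (Measure.integrable_toReal_rnDeriv.sub (integrable_const 1)) hpt
  have h2 : ∫ x, ((ξ.rnDeriv μ x).toReal - 1) ∂μ ≤ 0 := by
    rw [integral_sub Measure.integrable_toReal_rnDeriv (integrable_const 1)]
    simp only [integral_const, measure_univ, ENNReal.toReal_one, smul_eq_mul, one_mul]
    have := Measure.integral_toReal_rnDeriv' (μ := ξ) (ν := μ)
    rw [this]
    simp only [probReal_univ, Measure.real, measure_univ, ENNReal.toReal_one]
    have : 0 ≤ ((ξ.singularPart μ) Set.univ).toReal := ENNReal.toReal_nonneg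
    linarith
  rw [integral_neg] at hneg
  linarith [hb.trans h2, hneg]

lemma gibbs_ineq {α : Type*} [MeasurableSpace α] {μ ν : Measure α}
    [IsProbabilityMeasure μ] [IsProbabilityMeasure ν] (hμν : μ ≪ ν)
    (hint : Integrable (llr μ ν) μ) {f : α → ℝ} (hfμ : Integrable f μ)
    (hfν : Integrable (fun x => Real.exp (f x)) ν) :
    ∫ x, f x ∂μ - Real.log (∫ x, Real.exp (f x) ∂ν) ≤ ∫ x, llr μ ν x ∂μ := by
  have hξ : IsProbabilityMeasure (ν.tilted f) := isProbabilityMeasure_tilted hfν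
  have hμξ : μ ≪ ν.tilted f := hμν.trans (absolutelyContinuous_tilted hfν)
  have h0 : 0 ≤ ∫ x, llr μ (ν.tilted f) x ∂μ :=
    integral_llr_nonneg'_s17 hμξ (integrable_llr_tilted_right hμν hfμ hint hfν)
  rw [integral_llr_tilted_right hμν hfμ hfν hint] at h0
  linarith

/-- For `X` distributed uniformly on the middle third Cantor set `C`
(`μX = ℋ^m|_C / ℋ^m(C)` with `m = log 2 / log 3`) and squared-error distortion
`ρ(x,y) = |x − y|²`, the rate-distortion function satisfies
`R(D) ≥ σ log(σ/D) − σ − log(3 Γ(σ+1))` for all `D > 0`, where `σ = log 2 / log 9`. -/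
theorem stmt17
    (C : Set ℝ) (hCne : C.Nonempty) (hCcompact : IsCompact C)
    (hC : C = (fun y => (1 / 3 : ℝ) * y) '' C ∪ (fun y => (1 / 3 : ℝ) * y + 2 / 3) '' C)
    (m : ℝ) (hm : m = Real.log 2 / Real.log 3)
    (hHpos : 0 < μH[m] C) (hHfin : μH[m] C < ⊤)
    (μX : Measure ℝ) (hμX : μX = (μH[m] C)⁻¹ • (μH[m].restrict C))
    (ρ : ℝ → ℝ → ℝ≥0∞) (hρ : ∀ x y : ℝ, ρ x y = ENNReal.ofReal ((x - y) ^ 2))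
    (σ : ℝ) (hσ : σ = Real.log 2 / Real.log 9) :
    ∀ D : ℝ, 0 < D →
      RD μX ρ D ≥
        ((σ * Real.log (σ / D) - σ - Real.log (3 * Real.Gamma (σ + 1)) : ℝ) : EReal) := by
  -- basic constants
  have hlog2 : 0 < Real.log 2 := Real.log_pos (by norm_num)
  have hlog3 : 0 < Real.log 3 := Real.log_pos (by norm_num)
  have hm0 : 0 < m := by rw [hm]; positivity
  have hm1 : m ≤ 1 := by
    rw [hm, div_le_one hlog3]
    exact Real.log_le_log (by norm_num) (by norm_num)
  have h3m : (3:ℝ) ^ m = 2 := by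
    rw [hm, Real.rpow_def_of_pos (by norm_num : (0:ℝ) < 3),
      mul_div_cancel₀ _ hlog3.ne', Real.exp_log (by norm_num)]
  have hlog9 : Real.log 9 = 2 * Real.log 3 := by
    rw [show (9:ℝ) = 3^2 by norm_num, Real.log_pow]; push_cast; ring
  have hmσ : m = 2 * σ := by rw [hm, hσ, hlog9]; field_simp
  have hσ0 : 0 < σ := by rw [hσ, hlog9]; positivity
  have hCμ0 : μH[m] C ≠ 0 := hHpos.ne'
  have hCμt : μH[m] C ≠ ⊤ := hHfin.ne
  haveI hμXprob : IsProbabilityMeasure μX := by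
    constructor
    rw [hμX, Measure.smul_apply, Measure.restrict_apply MeasurableSet.univ, Set.univ_inter,
      smul_eq_mul, ENNReal.inv_mul_cancel hCμ0 hCμt]
  have hball : ∀ x δ : ℝ, 0 < δ → μX {z | |z - x| < δ} ≤ ENNReal.ofReal (3 * δ ^ m) := by
    intro x δ hδ
    have hmeasb : MeasurableSet {z : ℝ | |z - x| < δ} :=
      measurableSet_lt (by fun_prop) measurable_const
    rw [hμX, Measure.smul_apply, smul_eq_mul, Measure.restrict_apply hmeasb]
    have hb := cantor_ball_bound C hCne hCcompact hC hm0.le hm1 h3m x δ hδ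
    rw [Set.inter_comm] at hb
    calc (μH[m] C)⁻¹ * μH[m] ({z | |z - x| < δ} ∩ C)
        ≤ (μH[m] C)⁻¹ * (ENNReal.ofReal (3*δ^m) * μH[m] C) := mul_le_mul_right hb _
      _ = ENNReal.ofReal (3*δ^m) := by
          rw [mul_comm (ENNReal.ofReal _), ← mul_assoc, ENNReal.inv_mul_cancel hCμ0 hCμt, one_mul]
  intro D hD
  rw [ge_iff_le, RD]
  refine le_iInf fun P => le_iInf fun hP => le_iInf fun hfst => le_iInf fun hdist => ?_
  rw [mutualInfo]
  split_ifs with h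
  swap
  · exact le_top
  obtain ⟨hac, hint⟩ := h
  rw [EReal.coe_le_coe_iff]
  haveI := hP
  -- distortion facts
  simp_rw [hρ] at hdist
  have hsqmeas : AEMeasurable (fun p : ℝ×ℝ => ENNReal.ofReal ((p.1 - p.2)^2)) P := by fun_prop
  have hltop : ∫⁻ p : ℝ×ℝ, ENNReal.ofReal ((p.1-p.2)^2) ∂P ≠ ⊤ :=
    (lt_of_le_of_lt hdist ENNReal.ofReal_lt_top).ne
  have hsqint : Integrable (fun p : ℝ×ℝ => (p.1-p.2)^2) P := by
    have h1 := integrable_toReal_of_lintegral_ne_top hsqmeas hltop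
    refine h1.congr (ae_of_all _ fun p => ?_)
    simp [ENNReal.toReal_ofReal (sq_nonneg _)]
  have hsqle : ∫ p : ℝ×ℝ, (p.1 - p.2)^2 ∂P ≤ D := by
    rw [integral_eq_lintegral_of_nonneg_ae (ae_of_all _ fun p => sq_nonneg _)
      hsqint.aestronglyMeasurable]
    calc (∫⁻ p : ℝ×ℝ, ENNReal.ofReal ((p.1-p.2)^2) ∂P).toReal ≤ (ENNReal.ofReal D).toReal :=
          ENNReal.toReal_mono ENNReal.ofReal_ne_top hdist
      _ = D := ENNReal.toReal_ofReal hD.le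
  set s : ℝ := σ / D with hsdef
  have hs : 0 < s := div_pos hσ0 hD
  set g : ℝ × ℝ → ℝ := fun p => -(s * (p.1 - p.2)^2) with hgdef
  have hgint : Integrable g P := (hsqint.const_mul s).neg
  have hgexpQ : Integrable (fun p : ℝ×ℝ => Real.exp (g p)) (P.fst.prod P.snd) := by
    refine Integrable.mono' (integrable_const 1) ?_ (ae_of_all _ fun p => ?_)
    · have : Continuous fun p : ℝ×ℝ => Real.exp (g p) := by
        rw [hgdef]; fun_prop
      exact this.aestronglyMeasurable
    · rw [Real.norm_eq_abs, abs_of_pos (Real.exp_pos _), Real.exp_le_one_iff]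
      rw [hgdef]
      simp only [neg_nonpos]
      positivity
  -- bound on the partition function
  set K : ℝ := 3 * Real.Gamma (σ+1) * s ^ (-σ) with hKdef
  have hK : 0 < K := by
    have h1 : 0 < Real.Gamma (σ+1) := Real.Gamma_pos_of_pos (by linarith)
    have h2 : 0 < s ^ (-σ) := Real.rpow_pos_of_pos hs _
    positivity
  have hlintQ : ∫⁻ p : ℝ×ℝ, ENNReal.ofReal (Real.exp (g p)) ∂(P.fst.prod P.snd)
      ≤ ENNReal.ofReal K := by
    rw [hfst]
    have hmeasg : AEMeasurable (fun p : ℝ×ℝ => ENNReal.ofReal (Real.exp (g p)))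
        (μX.prod P.snd) := by rw [hgdef]; fun_prop
    rw [lintegral_prod_symm _ hmeasg]
    calc ∫⁻ b, ∫⁻ a, ENNReal.ofReal (Real.exp (g (a, b))) ∂μX ∂P.snd
        ≤ ∫⁻ _b, ENNReal.ofReal K ∂P.snd := by
          refine lintegral_mono fun b => ?_
          exact exp_moment_bound hσ0 hmσ hball b s hs
      _ = ENNReal.ofReal K := by simp
  set Z : ℝ := ∫ p, Real.exp (g p) ∂(P.fst.prod P.snd) with hZdef
  have hZpos : 0 < Z := integral_exp_pos hgexpQ
  have hZle : Z ≤ K := by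
    have hof : ENNReal.ofReal Z = ∫⁻ p, ENNReal.ofReal (Real.exp (g p)) ∂(P.fst.prod P.snd) :=
      ofReal_integral_eq_lintegral_ofReal hgexpQ (ae_of_all _ fun p => (Real.exp_pos _).le)
    have := hof ▸ hlintQ
    exact (ENNReal.ofReal_le_ofReal_iff hK.le).mp this
  have hlogZ : Real.log Z ≤ Real.log (3 * Real.Gamma (σ+1)) + (-σ) * Real.log s := by
    have h1 := Real.log_le_log hZpos hZle
    rwa [hKdef, Real.log_mul (by positivity) (Real.rpow_pos_of_pos hs _).ne',
      Real.log_rpow hs] at h1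
  -- Gibbs
  have hint' : Integrable (llr P (P.fst.prod P.snd)) P := hint
  have hgibbs := gibbs_ineq hac hint' hgint hgexpQ
  have hgoal : ∫ p, llr P (P.fst.prod P.snd) p ∂P
      = ∫ p, Real.log ((P.rnDeriv (P.fst.prod P.snd)) p).toReal ∂P := rfl
  rw [← hgoal]
  have hIg : ∫ p, g p ∂P = -(s * ∫ p : ℝ×ℝ, (p.1 - p.2)^2 ∂P) := by
    rw [hgdef]
    rw [integral_neg, integral_const_mul]
  have hsmul : s * ∫ p : ℝ×ℝ, (p.1 - p.2)^2 ∂P ≤ s * D :=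
    mul_le_mul_of_nonneg_left hsqle hs.le
  have hsD : s * D = σ := by rw [hsdef]; field_simp
  have hlogs : Real.log s = Real.log (σ / D) := by rw [hsdef]
  linarith [hgibbs, hIg, hsmul, hsD, hlogZ]
end
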